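/- arXiv:2510.20564 — 8 statements merged into one kernel-verified Lean document; each statement's English description precedes it below -/
import Mathlib

section
/- Let U, V be Hilbert spaces, b : U × V → ℂ a bounded sesquilinear form, U^δ ⊆ U and V^δ ⊆ V finite-dimensional subspaces, and suppose the discrete inf-sup constant γ := inf_{0≠u∈U^δ} sup_{0≠v∈V^δ} |b(u,v)|/(‖u‖_U ‖v‖_V) is positive. Then for every u ∈ U the Petrov–Galerkin/minimal-residual approximation u^δ := argmin_{w∈U^δ} sup_{0≠v∈V^δ} |b(u−w, v)|/‖v‖_V (assuming b satisfies |b(w,v)| ≤ ‖w‖_U‖v‖_V for all w,v) exists, is unique, and satisfies ‖u − u^δ‖_U ≤ (1/γ) inf_{w∈U^δ} ‖u − w‖_U. -/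
lemma opNorm_eq_iSup_aux' {E : Type*} [NormedAddCommGroup E] [NormedSpace ℂ E]
    (f : E →L[ℂ] ℂ) : ‖f‖ = ⨆ v : {v : E // v ≠ 0}, ‖f ↑v‖ / ‖(v : E)‖ := by
  have hle : ∀ v : {v : E // v ≠ 0}, ‖f ↑v‖ / ‖(v : E)‖ ≤ ‖f‖ := by
    intro v
    rw [div_le_iff₀ (norm_pos_iff.2 v.2)]
    exact f.le_opNorm v
  apply le_antisymm
  · apply f.opNorm_le_bound (Real.iSup_nonneg fun v => by positivity)
    intro x
    rcases eq_or_ne x 0 with rfl | hx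
    · simp
    · rw [← div_le_iff₀ (norm_pos_iff.2 hx)]
      exact le_ciSup ⟨‖f‖, Set.forall_mem_range.2 hle⟩ ⟨x, hx⟩
  · exact Real.iSup_le hle (norm_nonneg f)


set_option maxHeartbeats 1000000 in
lemma key2d_aux {E : Type*} [NormedAddCommGroup E] [InnerProductSpace ℂ E]
    (e d : E) (γ : ℝ) (hγ : 0 < γ) (hγ1 : γ ≤ 1)
    (K : ∀ c : ℂ, γ * ‖c • d‖ ≤ ‖e + c • d‖) : γ * ‖e‖ ≤ ‖e + d‖ := by
  set a := ‖e‖ with ha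
  set bb := ‖d‖ with hbb
  set p : ℂ := inner ℂ e d with hp
  set P := ‖p‖ with hP
  have hPnn : 0 ≤ P := norm_nonneg p
  have hann : 0 ≤ a := norm_nonneg e
  have hbnn : 0 ≤ bb := norm_nonneg d
  have S1 : ∀ t : ℝ, 0 ≤ t → γ^2 * (t^2 * bb^2) ≤ a^2 + t^2 * bb^2 - 2*t*P := by
    intro t ht
    obtain ⟨c, hc1, hc2⟩ : ∃ c : ℂ, ‖c‖ = t ∧ (c * p).re = -(t*P) := by
      rcases eq_or_ne p 0 with hp0 | hp0
      · refine ⟨(t : ℂ), ?_, by simp [hp0, hP]⟩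
        simp [Complex.norm_real, abs_of_nonneg ht]
      · have hPpos : 0 < P := by
          simpa [hP, AbsoluteValue.pos_iff] using hp0
        have hPne : (P:ℂ) ≠ 0 := by exact_mod_cast hPpos.ne'
        refine ⟨-(t:ℂ) * (starRingEnd ℂ p) / (P:ℂ), ?_, ?_⟩
        · rw [norm_div, norm_mul, norm_neg, Complex.norm_real, RCLike.norm_conj,
            Complex.norm_real, Real.norm_eq_abs, Real.norm_eq_abs, abs_of_nonneg ht,
            abs_of_nonneg hPnn, ← hP]
          field_simp
        · have h1 : (starRingEnd ℂ) p * p = (P:ℂ)^2 := by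
            rw [mul_comm, Complex.mul_conj']
          have : -(t:ℂ) * (starRingEnd ℂ p) / (P:ℂ) * p = -(t*P : ℝ) := by
            field_simp
            rw [mul_assoc, h1]
            push_cast; ring
          rw [this]; simp
    have hK := K c
    have hnsm : ‖c • d‖ = t * bb := by rw [norm_smul, hc1]
    have h2 : ‖e + c • d‖^2 = a^2 + 2*(c*p).re + t^2 * bb^2 := by
      rw [norm_add_sq (𝕜 := ℂ), inner_smul_right, norm_smul, hc1, ← hp]
      simp only [RCLike.re_to_complex]
      ring
    rw [hc2] at h2
    rw [hnsm] at hK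
    have hsq := mul_self_le_mul_self (by positivity) hK
    nlinarith [h2, hsq]
  set σ := Real.sqrt (1 - γ^2) with hσ
  have hσnn : 0 ≤ σ := Real.sqrt_nonneg _
  have hσsq : σ^2 = 1 - γ^2 := Real.sq_sqrt (by nlinarith)
  have S2 : P ≤ σ * a * bb := by
    rcases eq_or_lt_of_le hann with h0 | hapos
    · have he : e = 0 := by rw [← norm_eq_zero, ← ha, ← h0]
      have hp0 : P = 0 := by simp [hP, hp, he]
      rw [hp0]; positivity
    rcases eq_or_lt_of_le hbnn with h0 | hbpos
    · have hd : d = 0 := by rw [← norm_eq_zero, ← hbb, ← h0]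
      have hp0 : P = 0 := by simp [hP, hp, hd]
      rw [hp0]; positivity
    rcases eq_or_lt_of_le hσnn with h0 | hσpos
    · by_contra hcon
      push_neg at hcon
      have hPpos : 0 < P := by
        rw [← h0] at hcon; simpa using hcon
      have h1 := S1 (a^2/P + 1) (by positivity)
      have hσ0 : (1:ℝ) - γ^2 ≤ 0 := by
        have := Real.sqrt_eq_zero'.1 h0.symm
        linarith [this]
      have hexp : γ^2 = 1 := by nlinarith
      rw [hexp] at h1
      have h3 : 2*(a^2/P + 1)*P ≤ a^2 := by linarith
      have h5 : 2*(a^2/P + 1)*P = 2*a^2 + 2*P := by field_simp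
      nlinarith [h3, h5, hPpos, sq_nonneg a]
    · have h1 := S1 (a/(σ*bb)) (by positivity)
      have h4 : (a/(σ*bb))^2 * bb^2 = a^2/σ^2 := by
        field_simp
      rw [h4] at h1
      have h6 : 2*(a/(σ*bb))*P ≤ a^2 + (1 - γ^2) * (a^2/σ^2) := by linarith
      rw [← hσsq] at h6
      have h7 : σ^2 * (a^2/σ^2) = a^2 := by field_simp
      have h8 : 2*(a/(σ*bb))*P ≤ 2*a^2 := by nlinarith [h6, h7]
      have heq : 2*(a/(σ*bb))*P = (2*a*P)/(σ*bb) := by ring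
      rw [heq, div_le_iff₀ (by positivity)] at h8
      nlinarith [h8, hapos]
  have hre : -P ≤ p.re := by
    have h := Complex.abs_re_le_norm p
    rw [abs_le] at h
    linarith [h.1]
  have hfin : ‖e + d‖^2 = a^2 + 2*p.re + bb^2 := by
    have := norm_add_sq (𝕜 := ℂ) e d
    rw [← hp] at this
    simp only [RCLike.re_to_complex] at this
    linarith [this]
  have hsq : (γ*a)^2 ≤ ‖e + d‖^2 := by
    rw [hfin]
    nlinarith [sq_nonneg (σ*a - bb), hσsq]
  nlinarith [norm_nonneg (e + d), mul_nonneg hγ.le hann, hsq]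

lemma perp_sq_aux' {E : Type*} [NormedAddCommGroup E] [InnerProductSpace ℂ E]
    (x y : E) (h : (inner ℂ x y : ℂ) = 0) : ‖x + y‖^2 = ‖x‖^2 + ‖y‖^2 := by
  rw [norm_add_sq (𝕜 := ℂ), h]
  simp

set_option maxHeartbeats 4000000 in
/-- For a bounded sesquilinear form `b` with continuity constant 1,
finite-dimensional subspaces `U^δ, V^δ` and positive discrete inf-sup constant `γ`,
the minimal-residual (Petrov–Galerkin) approximation of any `u ∈ U` exists, is unique,
and satisfies the quasi-optimality bound `‖u − u^δ‖ ≤ (1/γ) inf_{w ∈ U^δ} ‖u − w‖`. -/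
theorem stmt_2
    {U V : Type*}
    [NormedAddCommGroup U] [InnerProductSpace ℂ U] [CompleteSpace U]
    [NormedAddCommGroup V] [InnerProductSpace ℂ V] [CompleteSpace V]
    (b : U →ₛₗ[starRingEnd ℂ] V →ₗ[ℂ] ℂ)
    (hb : ∀ (w : U) (v : V), ‖b w v‖ ≤ ‖w‖ * ‖v‖)
    (Uδ : Submodule ℂ U) (Vδ : Submodule ℂ V)
    [FiniteDimensional ℂ Uδ] [FiniteDimensional ℂ Vδ]
    (γ : ℝ)
    (hγdef : γ = ⨅ w : {w : Uδ // w ≠ 0}, ⨆ v : {v : Vδ // v ≠ 0},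
        ‖b (((w : Uδ) : U)) (((v : Vδ) : V))‖ / (‖((w : Uδ) : U)‖ * ‖((v : Vδ) : V)‖))
    (hγpos : 0 < γ)
    (u : U) :
    ∃! uδ : Uδ,
      (∀ w : Uδ,
        (⨆ v : {v : Vδ // v ≠ 0},
            ‖b (u - ((uδ : Uδ) : U)) (((v : Vδ) : V))‖ / ‖((v : Vδ) : V)‖)
          ≤ ⨆ v : {v : Vδ // v ≠ 0},
            ‖b (u - ((w : Uδ) : U)) (((v : Vδ) : V))‖ / ‖((v : Vδ) : V)‖) ∧
      ‖u - ((uδ : Uδ) : U)‖ ≤ (1 / γ) * ⨅ w : Uδ, ‖u - ((w : Uδ) : U)‖ := by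
  classical
  -- the lifted residual operator
  set F : U → (Vδ →L[ℂ] ℂ) := fun x => LinearMap.toContinuousLinearMap ((b x).comp Vδ.subtype)
    with hF
  have hFval : ∀ (x : U) (v : Vδ), F x v = b x (v : V) := by intro x v; simp [hF]
  have hFsub : ∀ x y, F (x - y) = F x - F y := by
    intro x y; simp [hF, map_sub, LinearMap.sub_comp]
  have hFadd : ∀ x y, F (x + y) = F x + F y := by
    intro x y; simp [hF, map_add, LinearMap.add_comp]
  have hFsmul : ∀ (c : ℂ) x, F (c • x) = (starRingEnd ℂ c) • F x := by
    intro c x; simp [hF, LinearMap.map_smulₛₗ, LinearMap.smul_comp]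
  set T : U → Vδ := fun x => (InnerProductSpace.toDual ℂ Vδ).symm (F x) with hT
  have hTsub : ∀ x y, T (x - y) = T x - T y := by intro x y; simp [hT, hFsub, map_sub]
  have hTadd : ∀ x y, T (x + y) = T x + T y := by intro x y; simp [hT, hFadd, map_add]
  have hTsmul : ∀ (c : ℂ) x, T (c • x) = c • T x := by
    intro c x; simp [hT, hFsmul, LinearIsometryEquiv.map_smulₛₗ]
  have hTnorm : ∀ x, ‖T x‖ = ‖F x‖ := fun x => (InnerProductSpace.toDual ℂ Vδ).symm.norm_map (F x)
  -- the residual value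
  set s : U → ℝ := fun x => ⨆ v : {v : Vδ // v ≠ 0}, ‖b x ((v : Vδ) : V)‖ / ‖((v : Vδ) : V)‖
    with hs
  have hsT : ∀ x, s x = ‖T x‖ := by
    intro x
    rw [hTnorm, opNorm_eq_iSup_aux', hs]
    exact (iSup_congr fun v => by rw [hFval]; rfl).symm
  -- continuity of T
  have hcont : ∀ x, ‖T x‖ ≤ ‖x‖ := by
    intro x
    rw [hTnorm]
    apply ContinuousLinearMap.opNorm_le_bound _ (norm_nonneg x)
    intro v
    rw [hFval]
    exact hb x v
  -- boundedness below of the inf family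
  have hbdd : BddBelow (Set.range fun w' : {w : Uδ // w ≠ 0} =>
      ⨆ v : {v : Vδ // v ≠ 0},
        ‖b (((w' : Uδ) : U)) (((v : Vδ) : V))‖ / (‖((w' : Uδ) : U)‖ * ‖((v : Vδ) : V)‖)) := by
    refine ⟨0, ?_⟩
    rintro x ⟨w', rfl⟩
    exact Real.iSup_nonneg fun v => by positivity
  -- the discrete inf-sup inequality
  have hγle : ∀ w : Uδ, γ * ‖(w : U)‖ ≤ ‖T (w : U)‖ := by
    intro w
    rcases eq_or_ne w 0 with rfl | hw
    · simpa using norm_nonneg (T ((0 : Uδ) : U))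
    have hwpos : 0 < ‖(w : U)‖ := by
      rw [norm_pos_iff]
      simpa using hw
    have h1 : γ ≤ ⨆ v : {v : Vδ // v ≠ 0},
        ‖b ((w : U)) (((v : Vδ) : V))‖ / (‖(w : U)‖ * ‖((v : Vδ) : V)‖) := by
      rw [hγdef]; exact ciInf_le hbdd ⟨w, hw⟩
    have h2 : (⨆ v : {v : Vδ // v ≠ 0},
        ‖b ((w : U)) (((v : Vδ) : V))‖ / (‖(w : U)‖ * ‖((v : Vδ) : V)‖))
        = s (w : U) * (‖(w : U)‖)⁻¹ := by
      rw [hs]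
      rw [Real.iSup_mul_of_nonneg (by positivity)]
      exact iSup_congr fun v => by rw [div_eq_mul_inv, div_eq_mul_inv, mul_inv]; ring
    rw [h2] at h1
    rw [← hsT]
    calc γ * ‖(w : U)‖ ≤ (s (w : U) * (‖(w : U)‖)⁻¹) * ‖(w : U)‖ :=
          mul_le_mul_of_nonneg_right h1 (norm_nonneg _)
      _ = s (w : U) := by field_simp
  -- γ ≤ 1
  have hne : Nonempty {w : Uδ // w ≠ 0} := by
    by_contra h
    rw [not_nonempty_iff] at h
    rw [hγdef, Real.iInf_of_isEmpty] at hγpos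
    exact lt_irrefl 0 hγpos
  have hγ1 : γ ≤ 1 := by
    obtain ⟨w₀⟩ := hne
    have h1 : γ ≤ ⨆ v : {v : Vδ // v ≠ 0},
        ‖b (((w₀ : Uδ) : U)) (((v : Vδ) : V))‖ / (‖((w₀ : Uδ) : U)‖ * ‖((v : Vδ) : V)‖) := by
      rw [hγdef]; exact ciInf_le hbdd w₀
    refine h1.trans (Real.iSup_le (fun v => ?_) zero_le_one)
    have hw0 : (0:ℝ) < ‖((w₀ : Uδ) : U)‖ := by
      rw [norm_pos_iff]; simpa using w₀.2
    have hv0 : (0:ℝ) < ‖((v : Vδ) : V)‖ := by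
      rw [norm_pos_iff]; simpa using v.2
    rw [div_le_one (by positivity)]
    simpa using hb _ _
  -- the bundled operator on Uδ and its range
  set Tl : Uδ →ₗ[ℂ] Vδ :=
    { toFun := fun w => T (w : U)
      map_add' := by intro x y; push_cast; rw [hTadd]
      map_smul' := by intro c x; push_cast; rw [hTsmul]; rfl } with hTl
  set M : Submodule ℂ Vδ := LinearMap.range Tl with hM
  set pr : Vδ := (M.orthogonalProjectionOnto (T u) : Vδ) with hpr
  have hprM : pr ∈ M := (M.orthogonalProjectionOnto (T u)).2
  obtain ⟨uδ, huδ⟩ : ∃ y : Uδ, Tl y = pr := id hprM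
  have horth : ∀ m ∈ M, (inner ℂ (T u - pr) m : ℂ) = 0 := fun m hm =>
    Submodule.starProjection_inner_eq_zero (T u) m hm
  have hpr' : T ((uδ : Uδ) : U) = pr := huδ
  have hmemM : ∀ y : Uδ, T ((y : Uδ) : U) ∈ M := fun y => ⟨y, rfl⟩
  have hminT : ∀ w : Uδ, ‖T u - pr‖ ≤ ‖T u - T ((w : Uδ) : U)‖ := by
    intro w
    have hmem : pr - T ((w:Uδ) : U) ∈ M := sub_mem hprM (hmemM w)
    have h := perp_sq_aux' (T u - pr) (pr - T ((w:Uδ):U)) (horth _ hmem)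
    have he : (T u - pr) + (pr - T ((w:Uδ):U)) = T u - T ((w:Uδ):U) := by abel
    rw [he] at h
    nlinarith [norm_nonneg (T u - T ((w:Uδ):U)), norm_nonneg (T u - pr),
      norm_nonneg (pr - T ((w:Uδ):U))]
  have hB : ∀ w : Uδ, γ * ‖u - ((uδ : Uδ) : U)‖ ≤ ‖u - ((w : Uδ) : U)‖ := by
    intro w
    have hdec : u - ((w:Uδ) : U) = (u - ((uδ:Uδ) : U)) + ((uδ - w : Uδ) : U) := by
      push_cast; abel
    rw [hdec]
    apply key2d_aux _ _ γ hγpos hγ1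
    intro c
    have hcd : c • ((uδ - w : Uδ) : U) = (((c • (uδ - w) : Uδ) : U)) := by push_cast; rfl
    rw [hcd]
    calc γ * ‖((c • (uδ - w) : Uδ) : U)‖ ≤ ‖T ((c • (uδ - w) : Uδ) : U)‖ := hγle _
      _ ≤ ‖(T u - pr) + T (((c • (uδ - w)) : Uδ) : U)‖ := by
          have h := perp_sq_aux' (T u - pr) (T (((c • (uδ - w)):Uδ) : U)) (horth _ (hmemM _))
          nlinarith [norm_nonneg ((T u - pr) + T (((c•(uδ-w)):Uδ):U)), norm_nonneg (T u - pr)]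
      _ = ‖T ((u - ((uδ:Uδ):U)) + ((c • (uδ - w) : Uδ) : U))‖ := by
          rw [hTadd, hTsub, hpr']
      _ ≤ ‖(u - ((uδ:Uδ):U)) + ((c • (uδ - w) : Uδ) : U)‖ := hcont _
  refine ⟨uδ, ⟨?_, ?_⟩, ?_⟩
  · intro w
    show s (u - ((uδ:Uδ):U)) ≤ s (u - ((w:Uδ):U))
    rw [hsT, hsT, hTsub, hTsub, hpr']
    exact hminT w
  · show ‖u - ((uδ:Uδ):U)‖ ≤ (1/γ) * ⨅ w : Uδ, ‖u - ((w:Uδ):U)‖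
    have hI : γ * ‖u - ((uδ:Uδ):U)‖ ≤ ⨅ w : Uδ, ‖u - ((w:Uδ):U)‖ := le_ciInf hB
    calc ‖u - ((uδ:Uδ):U)‖ = (1/γ) * (γ * ‖u - ((uδ:Uδ):U)‖) := by field_simp
      _ ≤ (1/γ) * ⨅ w : Uδ, ‖u - ((w:Uδ):U)‖ :=
          mul_le_mul_of_nonneg_left hI (by positivity)
  · rintro y ⟨hyA, -⟩
    have h1 : s (u - ((y:Uδ):U)) ≤ s (u - ((uδ:Uδ):U)) := hyA uδ
    rw [hsT, hsT, hTsub, hTsub, hpr'] at h1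
    have hmem : pr - T ((y:Uδ):U) ∈ M := sub_mem hprM (hmemM y)
    have h2 := perp_sq_aux' (T u - pr) (pr - T ((y:Uδ):U)) (horth _ hmem)
    have he : (T u - pr) + (pr - T ((y:Uδ):U)) = T u - T ((y:Uδ):U) := by abel
    rw [he] at h2
    have hC : ‖pr - T ((y:Uδ):U)‖^2 ≤ 0 := by
      nlinarith [norm_nonneg (T u - T ((y:Uδ):U)), norm_nonneg (T u - pr)]
    have h3 : ‖pr - T ((y:Uδ):U)‖ = 0 :=
      le_antisymm (by nlinarith [norm_nonneg (pr - T ((y:Uδ):U))]) (norm_nonneg _)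
    have h4 : T ((y:Uδ):U) = pr := (sub_eq_zero.1 (norm_eq_zero.1 h3)).symm
    have hz : T ((y - uδ : Uδ) : U) = 0 := by
      rw [Submodule.coe_sub, hTsub, h4, hpr', sub_self]
    have h5 : γ * ‖((y - uδ : Uδ) : U)‖ ≤ 0 := by
      have h := hγle (y - uδ)
      rw [hz] at h; simpa using h
    have h6 : ‖((y - uδ : Uδ):U)‖ = 0 :=
      le_antisymm (by nlinarith [norm_nonneg ((y - uδ:Uδ):U)]) (norm_nonneg _)
    have h7 : (y:U) - (uδ:U) = 0 := by
      have h := norm_eq_zero.1 h6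
      rwa [Submodule.coe_sub] at h
    exact SetLike.coe_eq_coe.1 (sub_eq_zero.1 h7)
end

section
/- Let u ∈ U be the exact solution and (v^δ, u^δ) the solution of the saddle-point system for the practical least-squares method. Then the Pythagorean identity ‖u − u^δ‖_U² = ‖u − (u^δ + B'v^δ)‖_U² + ‖B'v^δ‖_U² holds; in particular ‖B'v^δ‖_U ≤ ‖u − u^δ‖_U. -/
/-- Pythagorean identity for the practical least-squares method:
`‖u − u^δ‖² = ‖u − (u^δ + B'v^δ)‖² + ‖B'v^δ‖²`, hence `‖B'v^δ‖ ≤ ‖u − u^δ‖`,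
where `(v^δ, u^δ)` solves the discrete saddle-point system and `u` is the exact solution
(so that `q(ṽ) = ⟨u, B'ṽ⟩_U`). -/
theorem stmt_4
    {U V : Type*}
    [NormedAddCommGroup U] [InnerProductSpace ℂ U] [CompleteSpace U]
    [AddCommGroup V] [Module ℂ V]
    (B' : V →ₗ[ℂ] U)
    (Uδ : Submodule ℂ U) (Vδ : Submodule ℂ V)
    [FiniteDimensional ℂ Uδ] [FiniteDimensional ℂ Vδ]
    (u : U) (vδ : Vδ) (uδ : Uδ)
    (h1 : ∀ v ∈ Vδ,
      (inner ℂ (B' (vδ : V)) (B' v) : ℂ) + (inner ℂ ((uδ : U)) (B' v) : ℂ)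
        = (inner ℂ u (B' v) : ℂ))
    (h2 : ∀ w ∈ Uδ, (inner ℂ (B' (vδ : V)) (w : U) : ℂ) = 0) :
    ‖u - (uδ : U)‖ ^ 2
        = ‖u - ((uδ : U) + B' (vδ : V))‖ ^ 2 + ‖B' (vδ : V)‖ ^ 2 ∧
      ‖B' (vδ : V)‖ ≤ ‖u - (uδ : U)‖ := by
  set b := B' (vδ : V) with hb
  have hkey : (inner ℂ (u - (uδ : U)) b : ℂ) = (‖b‖ : ℂ) ^ 2 := by
    have h := h1 vδ vδ.2
    rw [← hb] at h
    rw [inner_sub_left]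
    have hbb : (inner ℂ b b : ℂ) = (‖b‖ : ℂ) ^ 2 := by
      rw [inner_self_eq_norm_sq_to_K]; norm_cast
    rw [← hbb]; linear_combination -h
  have hre : (RCLike.re (inner ℂ (u - (uδ : U)) b : ℂ)) = ‖b‖ ^ 2 := by
    rw [hkey]
    simp [← Complex.ofReal_pow]
  have hrw : u - ((uδ : U) + b) = (u - (uδ : U)) - b := by abel
  have hexp : ‖u - ((uδ : U) + b)‖ ^ 2
      = ‖u - (uδ : U)‖ ^ 2 - 2 * RCLike.re (inner ℂ (u - (uδ : U)) b : ℂ) + ‖b‖ ^ 2 := by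
    rw [hrw, @norm_sub_sq ℂ]
  have hid : ‖u - (uδ : U)‖ ^ 2 = ‖u - ((uδ : U) + b)‖ ^ 2 + ‖b‖ ^ 2 := by
    rw [hexp, hre]; ring
  refine ⟨hid, ?_⟩
  have h1' : ‖b‖ ^ 2 ≤ ‖u - (uδ : U)‖ ^ 2 := by
    nlinarith [sq_nonneg ‖u - ((uδ : U) + b)‖]
  nlinarith [norm_nonneg b, norm_nonneg (u - (uδ : U))]
end

section
/- With the boosted approximation u_bst := u^δ + B'v^δ, one has the error bound ‖u − u_bst‖_U ≤ (1/γ) inf{‖u − w‖_U : w ∈ U^δ + (B'(V^δ) ∩ (U^δ)^⊥)}, where γ is the discrete inf-sup constant. -/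
/-- Error bound for the boosted approximation `u_bst := u^δ + B'v^δ`:
`‖u − u_bst‖ ≤ (1/γ) inf { ‖u − w‖ : w ∈ U^δ + (B'(V^δ) ∩ (U^δ)^⊥) }`,
where `γ` is the discrete inf-sup constant. -/
theorem stmt_5
    {U V : Type*}
    [NormedAddCommGroup U] [InnerProductSpace ℂ U] [CompleteSpace U]
    [AddCommGroup V] [Module ℂ V]
    (B' : V →ₗ[ℂ] U)
    (Uδ : Submodule ℂ U) (Vδ : Submodule ℂ V)
    [FiniteDimensional ℂ Uδ] [FiniteDimensional ℂ Vδ]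
    (u : U) (vδ : Vδ) (uδ : Uδ)
    (h1 : ∀ v ∈ Vδ,
      (inner ℂ (B' (vδ : V)) (B' v) : ℂ) + (inner ℂ ((uδ : U)) (B' v) : ℂ)
        = (inner ℂ u (B' v) : ℂ))
    (h2 : ∀ w ∈ Uδ, (inner ℂ (B' (vδ : V)) (w : U) : ℂ) = 0)
    (γ : ℝ) (hγpos : 0 < γ)
    (hγ : γ = ⨅ w : {w : Uδ // w ≠ 0}, ⨆ v : {v : Vδ // B' ((v : Vδ) : V) ≠ 0},
        ‖(inner ℂ (((w : Uδ) : U)) (B' (((v : Vδ) : V))) : ℂ)‖ /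
          (‖((w : Uδ) : U)‖ * ‖B' (((v : Vδ) : V))‖)) :
    ‖u - ((uδ : U) + B' (vδ : V))‖
      ≤ (1 / γ) *
          ⨅ w : (Uδ ⊔ (Vδ.map B' ⊓ Uδᗮ) : Submodule ℂ U), ‖u - ((w : _) : U)‖ := by
  have hinner : ∀ x y : U, (inner ℂ x y : ℂ) = 0 → ‖x + y‖ ^ 2 = ‖x‖ ^ 2 + ‖y‖ ^ 2 :=
    fun x y h => by
      simpa [sq] using norm_add_sq_eq_norm_sq_add_norm_sq_of_inner_eq_zero x y h
  set Y : Submodule ℂ U := Vδ.map B' with hYdef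
  set e : U := u - ((uδ : U) + B' (vδ : V)) with he
  -- e is orthogonal to Y
  have heY : e ∈ Yᗮ := by
    rw [Submodule.mem_orthogonal]
    rintro y ⟨v, hv, rfl⟩
    have h := h1 v hv
    rw [← inner_eq_zero_symm, he, inner_sub_left, inner_add_left]
    rw [← h]
    ring
  -- inf-sup consequence: γ‖x‖ ≤ ‖P_Y x‖ for x ∈ Uδ
  have hPY : ∀ x : U, x ∈ Uδ → γ * ‖x‖ ≤ ‖(Submodule.orthogonalProjectionOnto Y x : U)‖ := by
    intro x hx
    rcases eq_or_ne x 0 with rfl | hx0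
    · simp
    have hxn : (0 : ℝ) < ‖x‖ := norm_pos_iff.mpr hx0
    have key : γ ≤ ‖(Submodule.orthogonalProjectionOnto Y x : U)‖ / ‖x‖ := by
      rw [hγ]
      have hx0' : (⟨x, hx⟩ : Uδ) ≠ 0 := fun h => hx0 (by simpa using congrArg Subtype.val h)
      refine le_trans (ciInf_le ?_ (⟨⟨x, hx⟩, hx0'⟩ : {w : Uδ // w ≠ 0})) ?_
      · refine ⟨0, ?_⟩
        rintro r ⟨w, rfl⟩
        exact Real.iSup_nonneg fun v => div_nonneg (norm_nonneg _)
          (mul_nonneg (norm_nonneg _) (norm_nonneg _))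
      · refine Real.iSup_le (fun v => ?_) (div_nonneg (norm_nonneg _) (norm_nonneg _))
        have hBv : (0 : ℝ) < ‖B' ((v : Vδ) : V)‖ := norm_pos_iff.mpr v.2
        have hmem : B' ((v : Vδ) : V) ∈ Y := ⟨((v : Vδ) : V), (v : Vδ).2, rfl⟩
        have hsub := (Submodule.sub_starProjection_mem_orthogonal (K := Y) x : x - (Y.orthogonalProjectionOnto x : U) ∈ Yᗮ)
        have h0 : (inner ℂ (x - (Submodule.orthogonalProjectionOnto Y x : U)) (B' ((v : Vδ) : V)) : ℂ) = 0 :=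
          (Submodule.mem_orthogonal' _ _).1 hsub _ hmem
        rw [inner_sub_left, sub_eq_zero] at h0
        have hcs : ‖(inner ℂ x (B' ((v : Vδ) : V)) : ℂ)‖
            ≤ ‖(Submodule.orthogonalProjectionOnto Y x : U)‖ * ‖B' ((v : Vδ) : V)‖ := by
          rw [h0]; exact norm_inner_le_norm _ _
        rw [div_le_div_iff₀ (by positivity) hxn]
        nlinarith [hxn.le, hBv.le, norm_nonneg (inner ℂ x (B' ((v : Vδ) : V)) : ℂ)]
    exact (le_div_iff₀ hxn).1 key
  -- γ ≤ 1
  have hγ1 : γ ≤ 1 := by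
    have hne : Nonempty {w : Uδ // w ≠ 0} := by
      by_contra hne
      rw [not_nonempty_iff] at hne
      have hz : γ = 0 := by rw [hγ]; exact Real.iInf_of_isEmpty _
      exact absurd hz (ne_of_gt hγpos)
    obtain ⟨w₀⟩ := hne
    have hw0 : ((w₀ : Uδ) : U) ≠ 0 := fun h => w₀.2 (by exact_mod_cast h)
    have hwn : (0 : ℝ) < ‖((w₀ : Uδ) : U)‖ := norm_pos_iff.mpr hw0
    have h1' := hPY _ (w₀ : Uδ).2
    have h2' : ‖(Submodule.orthogonalProjectionOnto Y ((w₀ : Uδ) : U) : U)‖ ≤ ‖((w₀ : Uδ) : U)‖ := by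
      have := (Submodule.orthogonalProjectionOnto Y).le_opNorm ((w₀ : Uδ) : U)
      have hno := Submodule.orthogonalProjectionOnto_norm_le Y
      calc ‖(Submodule.orthogonalProjectionOnto Y ((w₀ : Uδ) : U) : U)‖
          = ‖Submodule.orthogonalProjectionOnto Y ((w₀ : Uδ) : U)‖ := rfl
        _ ≤ ‖Submodule.orthogonalProjectionOnto Y‖ * ‖((w₀ : Uδ) : U)‖ := this
        _ ≤ 1 * ‖((w₀ : Uδ) : U)‖ := by nlinarith [hwn.le]
        _ = ‖((w₀ : Uδ) : U)‖ := one_mul _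
    nlinarith
  -- decomposition of e
  set a : U := (Submodule.orthogonalProjectionOnto Uδ e : U) with ha
  set b : U := e - a with hb
  have haU : a ∈ Uδ := Submodule.coe_mem _
  have hbU : b ∈ Uδᗮ := Submodule.sub_starProjection_mem_orthogonal e
  have hebab : e = a + b := by rw [hb]; abel
  have hab0 : (inner ℂ a b : ℂ) = 0 := (Submodule.mem_orthogonal _ _).1 hbU a haU
  have hpyth : ‖e‖ ^ 2 = ‖a‖ ^ 2 + ‖b‖ ^ 2 := by
    rw [hebab]; exact hinner a b hab0
  -- key estimate γ²‖e‖² ≤ ‖b‖²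
  have hkey : γ ^ 2 * ‖e‖ ^ 2 ≤ ‖b‖ ^ 2 := by
    rcases eq_or_ne a 0 with ha0 | ha0
    · have hEb : ‖e‖ = ‖b‖ := by rw [hebab, ha0, zero_add]
      have hsq1 : γ ^ 2 ≤ 1 := by nlinarith
      have hEb2 : ‖e‖ ^ 2 = ‖b‖ ^ 2 := by rw [hEb]
      nlinarith [mul_le_mul_of_nonneg_right hsq1 (sq_nonneg ‖b‖), hEb2]
    · have han : (0 : ℝ) < ‖a‖ := norm_pos_iff.mpr ha0
      set y : U := (Submodule.orthogonalProjectionOnto Y a : U) with hy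
      have hyY : y ∈ Y := Submodule.coe_mem _
      have hay : γ * ‖a‖ ≤ ‖y‖ := hPY a haU
      have haysub : a - y ∈ Yᗮ := Submodule.sub_starProjection_mem_orthogonal a
      have hpy2 : ‖a‖ ^ 2 = ‖y‖ ^ 2 + ‖a - y‖ ^ 2 := by
        have h0 : (inner ℂ y (a - y) : ℂ) = 0 :=
          (Submodule.mem_orthogonal Y (a - y)).1 haysub y hyY
        have := hinner y (a - y) h0
        rwa [add_sub_cancel] at this
      have hae : (inner ℂ a e : ℂ) = (‖a‖ : ℂ) ^ 2 := by
        rw [hebab, inner_add_right, hab0, add_zero, inner_self_eq_norm_sq_to_K]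
        norm_cast
      have hye : (inner ℂ y e : ℂ) = 0 := (Submodule.mem_orthogonal Y e).1 heY y hyY
      have hcs : ‖a‖ ^ 2 ≤ ‖a - y‖ * ‖e‖ := by
        have h0 : (inner ℂ (a - y) e : ℂ) = inner ℂ a e := by
          rw [inner_sub_left, hye, sub_zero]
        have h2' : ‖(inner ℂ (a - y) e : ℂ)‖ = ‖a‖ ^ 2 := by
          rw [h0, hae, norm_pow]
          simp
        calc ‖a‖ ^ 2 = ‖(inner ℂ (a - y) e : ℂ)‖ := h2'.symm
          _ ≤ ‖a - y‖ * ‖e‖ := norm_inner_le_norm _ _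
      have hsub2 : ‖a - y‖ ^ 2 ≤ ‖a‖ ^ 2 - (γ * ‖a‖) ^ 2 := by
        nlinarith [norm_nonneg y, hay, mul_nonneg hγpos.le han.le]
      have e1 : ‖a‖ ^ 2 * ‖a‖ ^ 2 ≤ (‖a - y‖ * ‖e‖) * (‖a - y‖ * ‖e‖) :=
        mul_self_le_mul_self (sq_nonneg _) hcs
      have e2 : ‖a - y‖ ^ 2 * ‖e‖ ^ 2 ≤ (‖a‖ ^ 2 - (γ * ‖a‖) ^ 2) * ‖e‖ ^ 2 :=
        mul_le_mul_of_nonneg_right hsub2 (sq_nonneg _)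
      have hA : (0 : ℝ) < ‖a‖ ^ 2 := by positivity
      have h4 : ‖a‖ ^ 2 ≤ (1 - γ ^ 2) * ‖e‖ ^ 2 := by nlinarith [e1, e2, hA]
      linarith [hpyth, h4]
  -- bound for every element of the sum space
  have hbound : ∀ s : (Uδ ⊔ (Y ⊓ Uδᗮ) : Submodule ℂ U), γ * ‖e‖ ≤ ‖u - (s : U)‖ := by
    rintro ⟨s, hs⟩
    rw [Submodule.mem_sup] at hs
    obtain ⟨q, hq, p, hp, rfl⟩ := hs
    obtain ⟨hpY, hpU⟩ := hp
    have hdY : B' (vδ : V) - p ∈ Y := Y.sub_mem ⟨(vδ : V), vδ.2, rfl⟩ hpY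
    have hBvU : B' (vδ : V) ∈ Uδᗮ := by
      rw [Submodule.mem_orthogonal]
      intro w hw
      rw [← inner_eq_zero_symm]
      exact h2 w hw
    have hdU : B' (vδ : V) - p ∈ Uδᗮ := Submodule.sub_mem _ hBvU hpU
    have hcU : (uδ : U) - q ∈ Uδ := Submodule.sub_mem _ uδ.2 hq
    have hdecomp : u - (q + p) = (a + ((uδ : U) - q)) + (b + (B' (vδ : V) - p)) := by
      rw [hb, he]; abel
    have h5 : (inner ℂ (a + ((uδ : U) - q)) (b + (B' (vδ : V) - p)) : ℂ) = 0 :=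
      (Submodule.mem_orthogonal _ _).1 (Submodule.add_mem _ hbU hdU) _
        (Submodule.add_mem _ haU hcU)
    have h6 : (inner ℂ b (B' (vδ : V) - p) : ℂ) = 0 := by
      rw [← inner_eq_zero_symm]
      have h7 : (inner ℂ (B' (vδ : V) - p) e : ℂ) = 0 :=
        (Submodule.mem_orthogonal Y e).1 heY _ hdY
      have h8 : (inner ℂ (B' (vδ : V) - p) a : ℂ) = 0 := by
        rw [← inner_eq_zero_symm]
        exact (Submodule.mem_orthogonal _ _).1 hdU a haU
      rw [hb, inner_sub_right, h7, h8, sub_zero]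
    have hn1 : ‖u - (q + p)‖ ^ 2
        = ‖a + ((uδ : U) - q)‖ ^ 2 + ‖b + (B' (vδ : V) - p)‖ ^ 2 := by
      rw [hdecomp]; exact hinner _ _ h5
    have hn2 : ‖b + (B' (vδ : V) - p)‖ ^ 2 = ‖b‖ ^ 2 + ‖B' (vδ : V) - p‖ ^ 2 :=
      hinner _ _ h6
    have hsq : (γ * ‖e‖) ^ 2 ≤ ‖u - (q + p)‖ ^ 2 := by
      nlinarith [hkey, sq_nonneg ‖a + ((uδ : U) - q)‖, sq_nonneg ‖B' (vδ : V) - p‖]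
    exact (pow_le_pow_iff_left₀ (by positivity) (norm_nonneg _) two_ne_zero).1 hsq
  haveI : Nonempty (Uδ ⊔ (Y ⊓ Uδᗮ) : Submodule ℂ U) := ⟨0⟩
  have hinf : γ * ‖e‖ ≤ ⨅ w : (Uδ ⊔ (Y ⊓ Uδᗮ) : Submodule ℂ U), ‖u - (w : U)‖ :=
    le_ciInf hbound
  rw [one_div, ← div_eq_inv_mul, le_div_iff₀ hγpos, mul_comm]
  exact hinf
end

section
/- Let M^V be Hermitian positive definite, B a matrix, M^U Hermitian positive definite, and S := B^H (M^V)^{-1} B the Schur complement. If γ denotes the inf-sup constant γ = inf_{z≠0} sup_{v≠0} |v^H B z| / (√(z^H M^U z) · √(v^H M^V v)) and the continuity bound sup_{z≠0} sup_{v≠0} |v^H B z| / (√(z^H M^U z)·√(v^H M^V v)) ≤ 1 holds, then γ² M^U ≤ S ≤ M^U in the Loewner order, and the lower bound is attained: there exists z ≠ 0 with z^H S z = γ² z^H M^U z. -/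
open Matrix
open scoped ComplexOrder


lemma dot_conjT {k l : ℕ} (A : Matrix (Fin k) (Fin l) ℂ) (x : Fin l → ℂ) (y : Fin k → ℂ) :
    star x ⬝ᵥ (Aᴴ *ᵥ y) = star (A *ᵥ x) ⬝ᵥ y := by
  rw [dotProduct_mulVec, star_mulVec]

lemma norm_euclid {k : ℕ} (a : Fin k → ℂ) :
    ‖(WithLp.equiv 2 (Fin k → ℂ)).symm a‖ = Real.sqrt ((star a ⬝ᵥ a).re) := by
  rw [norm_eq_sqrt_re_inner (𝕜 := ℂ), WithLp.equiv_symm_apply, EuclideanSpace.inner_toLp_toLp,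
    dotProduct_comm]
  rfl

lemma cs_dot {k : ℕ} (a b : Fin k → ℂ) :
    ‖star a ⬝ᵥ b‖ ≤ Real.sqrt ((star a ⬝ᵥ a).re) * Real.sqrt ((star b ⬝ᵥ b).re) := by
  have h := norm_inner_le_norm (𝕜 := ℂ)
    ((WithLp.equiv 2 (Fin k → ℂ)).symm a) ((WithLp.equiv 2 (Fin k → ℂ)).symm b)
  rwa [norm_euclid, norm_euclid, WithLp.equiv_symm_apply, EuclideanSpace.inner_toLp_toLp,
    dotProduct_comm] at h

lemma quad_triple {k l : ℕ} (A : Matrix (Fin k) (Fin l) ℂ) (C : Matrix (Fin k) (Fin k) ℂ)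
    (x : Fin l → ℂ) :
    star x ⬝ᵥ ((Aᴴ * C * A) *ᵥ x) = star (A *ᵥ x) ⬝ᵥ (C *ᵥ (A *ᵥ x)) := by
  rw [← mulVec_mulVec, ← mulVec_mulVec, dot_conjT]

lemma herm_dot_im {k : ℕ} {A : Matrix (Fin k) (Fin k) ℂ} (hA : A.IsHermitian)
    (x : Fin k → ℂ) : (star x ⬝ᵥ (A *ᵥ x)).im = 0 := by
  apply Complex.conj_eq_iff_im.mp
  have h1 : star x ⬝ᵥ (A *ᵥ x) = star (star (A *ᵥ x) ⬝ᵥ x) := star_dotProduct _ _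
  calc (starRingEnd ℂ) (star x ⬝ᵥ (A *ᵥ x))
      = star (star x ⬝ᵥ (A *ᵥ x)) := rfl
    _ = star (A *ᵥ x) ⬝ᵥ x := by rw [h1, star_star]
    _ = star x ⬝ᵥ (Aᴴ *ᵥ x) := (dot_conjT A x x).symm
    _ = star x ⬝ᵥ (A *ᵥ x) := by rw [hA.eq]

lemma quad_smul {k : ℕ} (M : Matrix (Fin k) (Fin k) ℂ) (c : ℝ) (x : Fin k → ℂ) :
    (star ((c:ℂ) • x) ⬝ᵥ (M *ᵥ ((c:ℂ) • x))).re = c^2 * (star x ⬝ᵥ (M *ᵥ x)).re := by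
  rw [mulVec_smul, star_smul, smul_dotProduct, dotProduct_smul]
  simp [Complex.mul_re, Complex.mul_im]
  ring


section
variable {m n : ℕ} {MV : Matrix (Fin m) (Fin m) ℂ} (B : Matrix (Fin m) (Fin n) ℂ)

lemma mv_inv_cancel (hMV : MV.PosDef) (w : Fin m → ℂ) : MV *ᵥ (MV⁻¹ *ᵥ w) = w := by
  rw [mulVec_mulVec, mul_nonsing_inv _ ((isUnit_iff_isUnit_det _).mp hMV.isUnit), one_mulVec]

lemma quad_S (z : Fin n → ℂ) :
    star z ⬝ᵥ ((Bᴴ * MV⁻¹ * B) *ᵥ z) = star (B *ᵥ z) ⬝ᵥ (MV⁻¹ *ᵥ (B *ᵥ z)) :=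
  quad_triple B MV⁻¹ z

lemma dot_inv_comm (hMV : MV.PosDef) (w : Fin m → ℂ) :
    star w ⬝ᵥ (MV⁻¹ *ᵥ w) = star (MV⁻¹ *ᵥ w) ⬝ᵥ w := by
  conv_lhs => rw [← hMV.isHermitian.inv.eq]
  rw [dot_conjT]

lemma pair_v0 (hMV : MV.PosDef) (z : Fin n → ℂ) :
    star (MV⁻¹ *ᵥ (B *ᵥ z)) ⬝ᵥ (B *ᵥ z) = star z ⬝ᵥ ((Bᴴ * MV⁻¹ * B) *ᵥ z) := by
  rw [quad_S, dot_inv_comm hMV]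

lemma qV_v0 (hMV : MV.PosDef) (z : Fin n → ℂ) :
    star (MV⁻¹ *ᵥ (B *ᵥ z)) ⬝ᵥ (MV *ᵥ (MV⁻¹ *ᵥ (B *ᵥ z))) =
      star z ⬝ᵥ ((Bᴴ * MV⁻¹ * B) *ᵥ z) := by
  rw [mv_inv_cancel hMV, pair_v0 B hMV]

open scoped MatrixOrder in
lemma cs_bound (hMV : MV.PosDef) (z : Fin n → ℂ) (v : Fin m → ℂ) :
    ‖star v ⬝ᵥ (B *ᵥ z)‖ ≤
      Real.sqrt ((star z ⬝ᵥ ((Bᴴ * MV⁻¹ * B) *ᵥ z)).re) *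
        Real.sqrt ((star v ⬝ᵥ (MV *ᵥ v)).re) := by
  have hPH : ((CFC.sqrt MV))ᴴ = (CFC.sqrt MV) := (CFC.sqrt_nonneg MV).posSemidef.1
  have hPP : (CFC.sqrt MV) * (CFC.sqrt MV) = MV := CFC.sqrt_mul_sqrt_self MV hMV.posSemidef.nonneg
  have key : ∀ x y : Fin m → ℂ,
      star ((CFC.sqrt MV) *ᵥ x) ⬝ᵥ ((CFC.sqrt MV) *ᵥ y) = star x ⬝ᵥ (MV *ᵥ y) := by
    intro x y
    rw [← dot_conjT, hPH, mulVec_mulVec, hPP]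
  have e1 : star v ⬝ᵥ (B *ᵥ z) =
      star ((CFC.sqrt MV) *ᵥ v) ⬝ᵥ ((CFC.sqrt MV) *ᵥ (MV⁻¹ *ᵥ (B *ᵥ z))) := by
    rw [key, mv_inv_cancel hMV]
  have e2 := key v v
  have e3 : star ((CFC.sqrt MV) *ᵥ (MV⁻¹ *ᵥ (B *ᵥ z))) ⬝ᵥ
      ((CFC.sqrt MV) *ᵥ (MV⁻¹ *ᵥ (B *ᵥ z))) = star z ⬝ᵥ ((Bᴴ * MV⁻¹ * B) *ᵥ z) := by
    rw [key, qV_v0 B hMV]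
  calc ‖star v ⬝ᵥ (B *ᵥ z)‖
      = ‖star ((CFC.sqrt MV) *ᵥ v) ⬝ᵥ ((CFC.sqrt MV) *ᵥ (MV⁻¹ *ᵥ (B *ᵥ z)))‖ := by
        rw [e1]
    _ ≤ _ := cs_dot _ _
    _ = _ := by rw [e2, e3, mul_comm]

end


lemma norm_of_nonneg' {c : ℂ} (hc : 0 ≤ c) : ‖c‖ = c.re := by
  obtain ⟨h1, h2⟩ := Complex.nonneg_iff.mp hc
  rw [Complex.norm_def, Complex.normSq_apply, ← h2, mul_zero, add_zero,
    Real.sqrt_mul_self h1]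

section
variable {m n : ℕ} {MV : Matrix (Fin m) (Fin m) ℂ} {MU : Matrix (Fin n) (Fin n) ℂ}
  (B : Matrix (Fin m) (Fin n) ℂ)

lemma sup_eq (hMV : MV.PosDef) (hMU : MU.PosDef) (z : Fin n → ℂ) (hz : z ≠ 0) :
    (⨆ v : {v : Fin m → ℂ // v ≠ 0},
      ‖star (v : Fin m → ℂ) ⬝ᵥ (B *ᵥ z)‖ /
        (Real.sqrt ((star z ⬝ᵥ (MU *ᵥ z)).re) *
          Real.sqrt ((star (v : Fin m → ℂ) ⬝ᵥ (MV *ᵥ (v : Fin m → ℂ))).re)))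
    = Real.sqrt ((star z ⬝ᵥ ((Bᴴ * MV⁻¹ * B) *ᵥ z)).re) /
        Real.sqrt ((star z ⬝ᵥ (MU *ᵥ z)).re) := by
  have hSpsd : (Bᴴ * MV⁻¹ * B).PosSemidef := hMV.inv.posSemidef.conjTranspose_mul_mul_same B
  have ht0 : 0 ≤ (star z ⬝ᵥ ((Bᴴ * MV⁻¹ * B) *ᵥ z)).re := by
    simpa using hSpsd.re_dotProduct_nonneg z
  have hu : 0 < (star z ⬝ᵥ (MU *ᵥ z)).re := by
    simpa using hMU.re_dotProduct_pos hz
  set t := (star z ⬝ᵥ ((Bᴴ * MV⁻¹ * B) *ᵥ z)).re with htdef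
  set u := (star z ⬝ᵥ (MU *ᵥ z)).re with hudef
  have hub : ∀ v : {v : Fin m → ℂ // v ≠ 0},
      ‖star (v : Fin m → ℂ) ⬝ᵥ (B *ᵥ z)‖ /
        (Real.sqrt u * Real.sqrt ((star (v : Fin m → ℂ) ⬝ᵥ (MV *ᵥ (v : Fin m → ℂ))).re))
      ≤ Real.sqrt t / Real.sqrt u := by
    rintro ⟨v, hv⟩
    have hqv : 0 < (star v ⬝ᵥ (MV *ᵥ v)).re := by simpa using hMV.re_dotProduct_pos hv
    have h1 := cs_bound B hMV z v
    calc ‖star v ⬝ᵥ (B *ᵥ z)‖ / (Real.sqrt u * Real.sqrt ((star v ⬝ᵥ (MV *ᵥ v)).re))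
        ≤ (Real.sqrt t * Real.sqrt ((star v ⬝ᵥ (MV *ᵥ v)).re)) /
            (Real.sqrt u * Real.sqrt ((star v ⬝ᵥ (MV *ᵥ v)).re)) := by
          apply div_le_div_of_nonneg_right h1 ?_ |>.trans_eq rfl
          · positivity
        _ = Real.sqrt t / Real.sqrt u := by
          rw [mul_div_mul_right _ _ (ne_of_gt (Real.sqrt_pos.mpr hqv))]
  rcases isEmpty_or_nonempty {v : Fin m → ℂ // v ≠ 0} with hE | hNE
  · rw [Real.iSup_of_isEmpty]
    have hw : B *ᵥ z = 0 := by
      by_contra hw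
      exact hE.false ⟨B *ᵥ z, hw⟩
    have : t = 0 := by rw [htdef, quad_S B z, hw]; simp
    rw [this, Real.sqrt_zero, zero_div]
  · have hbdd : BddAbove (Set.range fun v : {v : Fin m → ℂ // v ≠ 0} =>
        ‖star (v : Fin m → ℂ) ⬝ᵥ (B *ᵥ z)‖ /
          (Real.sqrt u * Real.sqrt ((star (v : Fin m → ℂ) ⬝ᵥ (MV *ᵥ (v : Fin m → ℂ))).re))) := by
      refine ⟨Real.sqrt t / Real.sqrt u, ?_⟩
      rintro x ⟨v, rfl⟩
      exact hub v
    refine le_antisymm (ciSup_le hub) ?_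
    by_cases hw : B *ᵥ z = 0
    · have ht : t = 0 := by rw [htdef, quad_S B z, hw]; simp
      rw [ht, Real.sqrt_zero, zero_div]
      obtain ⟨v⟩ := hNE
      refine le_trans ?_ (le_ciSup hbdd v)
      positivity
    · -- attainment at v₀
      have htpos : 0 < t := by
        rw [htdef, quad_S B z]
        simpa using hMV.inv.re_dotProduct_pos hw
      set v₀ := MV⁻¹ *ᵥ (B *ᵥ z) with hv₀def
      have hv₀ : v₀ ≠ 0 := by
        intro h
        have := pair_v0 B hMV z
        rw [← hv₀def, h] at this
        simp only [star_zero, zero_dotProduct] at this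
        rw [htdef, ← this] at htpos
        simp at htpos
      have hval : star v₀ ⬝ᵥ (B *ᵥ z) = star z ⬝ᵥ ((Bᴴ * MV⁻¹ * B) *ᵥ z) := pair_v0 B hMV z
      have hnorm : ‖star v₀ ⬝ᵥ (B *ᵥ z)‖ = t := by
        rw [hval, norm_of_nonneg' (hSpsd.dotProduct_mulVec_nonneg z)]
      have hqv : (star v₀ ⬝ᵥ (MV *ᵥ v₀)).re = t := by
        rw [hv₀def, qV_v0 B hMV z]
      have hratio : ‖star v₀ ⬝ᵥ (B *ᵥ z)‖ /
          (Real.sqrt u * Real.sqrt ((star v₀ ⬝ᵥ (MV *ᵥ v₀)).re)) = Real.sqrt t / Real.sqrt u := by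
        rw [hnorm, hqv]
        rw [show t = Real.sqrt t * Real.sqrt t from (Real.mul_self_sqrt ht0).symm]
        rw [show Real.sqrt (Real.sqrt t * Real.sqrt t) = Real.sqrt t from by
          rw [Real.sqrt_mul_self (Real.sqrt_nonneg t)]]
        rw [mul_comm (Real.sqrt u), mul_div_mul_left _ _ (ne_of_gt (Real.sqrt_pos.mpr htpos))]
      calc Real.sqrt t / Real.sqrt u = _ := hratio.symm
        _ ≤ _ := le_ciSup hbdd ⟨v₀, hv₀⟩

end


/-- For Hermitian positive definite `M^V, M^U`, the Schur complement
`S = Bᴴ (M^V)⁻¹ B` satisfies `γ² M^U ≤ S ≤ M^U` in the Loewner order, where `γ` is the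
inf-sup constant and the continuity bound holds; the lower bound is attained by some `z ≠ 0`. -/
theorem stmt_6 {m n : ℕ} (hn : 0 < n)
    (MV : Matrix (Fin m) (Fin m) ℂ) (hMV : MV.PosDef)
    (MU : Matrix (Fin n) (Fin n) ℂ) (hMU : MU.PosDef)
    (B : Matrix (Fin m) (Fin n) ℂ)
    (hcont : ∀ (z : Fin n → ℂ) (v : Fin m → ℂ),
      ‖star v ⬝ᵥ (B *ᵥ z)‖ ≤
        Real.sqrt ((star z ⬝ᵥ (MU *ᵥ z)).re) * Real.sqrt ((star v ⬝ᵥ (MV *ᵥ v)).re))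
    (γ : ℝ)
    (hγ : γ = ⨅ z : {z : Fin n → ℂ // z ≠ 0}, ⨆ v : {v : Fin m → ℂ // v ≠ 0},
      ‖star ((v : Fin m → ℂ)) ⬝ᵥ (B *ᵥ ((z : Fin n → ℂ)))‖ /
        (Real.sqrt ((star ((z : Fin n → ℂ)) ⬝ᵥ (MU *ᵥ ((z : Fin n → ℂ)))).re) *
          Real.sqrt ((star ((v : Fin m → ℂ)) ⬝ᵥ (MV *ᵥ ((v : Fin m → ℂ)))).re))) :
    ((Bᴴ * MV⁻¹ * B - ((γ : ℂ) ^ 2) • MU).PosSemidef ∧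
      (MU - Bᴴ * MV⁻¹ * B).PosSemidef) ∧
    ∃ z : Fin n → ℂ, z ≠ 0 ∧
      star z ⬝ᵥ ((Bᴴ * MV⁻¹ * B) *ᵥ z) = ((γ : ℂ) ^ 2) * (star z ⬝ᵥ (MU *ᵥ z)) := by
  have hSpsd : (Bᴴ * MV⁻¹ * B).PosSemidef := hMV.inv.posSemidef.conjTranspose_mul_mul_same B
  have ht0 : ∀ z, 0 ≤ (star z ⬝ᵥ ((Bᴴ * MV⁻¹ * B) *ᵥ z)).re := fun z => by
    simpa using hSpsd.re_dotProduct_nonneg z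
  have hu0 : ∀ z, 0 ≤ (star z ⬝ᵥ (MU *ᵥ z)).re := fun z => by
    simpa using hMU.posSemidef.re_dotProduct_nonneg z
  have hupos : ∀ z, z ≠ 0 → 0 < (star z ⬝ᵥ (MU *ᵥ z)).re := fun z hz => by
    simpa using hMU.re_dotProduct_pos hz
  have him : ∀ x, (star x ⬝ᵥ ((Bᴴ * MV⁻¹ * B) *ᵥ x)).im = 0 := fun x =>
    herm_dot_im hSpsd.1 x
  have himU : ∀ x, (star x ⬝ᵥ (MU *ᵥ x)).im = 0 := fun x => herm_dot_im hMU.1 x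
  -- the inf-sup constant as an inf of the Rayleigh-type quotient
  have hγ' : γ = ⨅ z : {z : Fin n → ℂ // z ≠ 0},
      Real.sqrt ((star (z : Fin n → ℂ) ⬝ᵥ ((Bᴴ * MV⁻¹ * B) *ᵥ (z : Fin n → ℂ))).re) /
        Real.sqrt ((star (z : Fin n → ℂ) ⬝ᵥ (MU *ᵥ (z : Fin n → ℂ))).re) := by
    rw [hγ]
    exact iInf_congr fun z => sup_eq B hMV hMU z z.2
  haveI hNE : Nonempty {z : Fin n → ℂ // z ≠ 0} := by
    refine ⟨⟨fun _ => 1, fun h => ?_⟩⟩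
    have := congrFun h ⟨0, hn⟩
    simp at this
  have hγnn : 0 ≤ γ := by
    rw [hγ']
    exact le_ciInf fun z => by positivity
  have hbddB : BddBelow (Set.range fun z : {z : Fin n → ℂ // z ≠ 0} =>
      Real.sqrt ((star (z : Fin n → ℂ) ⬝ᵥ ((Bᴴ * MV⁻¹ * B) *ᵥ (z : Fin n → ℂ))).re) /
        Real.sqrt ((star (z : Fin n → ℂ) ⬝ᵥ (MU *ᵥ (z : Fin n → ℂ))).re)) := by
    refine ⟨0, ?_⟩
    rintro x ⟨z, rfl⟩
    positivity
  have hγle : ∀ z : Fin n → ℂ, z ≠ 0 → γ ≤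
      Real.sqrt ((star z ⬝ᵥ ((Bᴴ * MV⁻¹ * B) *ᵥ z)).re) /
        Real.sqrt ((star z ⬝ᵥ (MU *ᵥ z)).re) := fun z hz => by
    rw [hγ']
    exact ciInf_le hbddB ⟨z, hz⟩
  -- lower quadratic bound
  have hlow : ∀ z : Fin n → ℂ,
      γ^2 * (star z ⬝ᵥ (MU *ᵥ z)).re ≤ (star z ⬝ᵥ ((Bᴴ * MV⁻¹ * B) *ᵥ z)).re := by
    intro z
    by_cases hz : z = 0
    · subst hz; simp
    · have h := hγle z hz
      have hu := hupos z hz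
      have h1 : γ * Real.sqrt ((star z ⬝ᵥ (MU *ᵥ z)).re) ≤
          Real.sqrt ((star z ⬝ᵥ ((Bᴴ * MV⁻¹ * B) *ᵥ z)).re) := by
        rw [← le_div_iff₀ (Real.sqrt_pos.mpr hu)]
        exact h
      have h3 : (γ * Real.sqrt ((star z ⬝ᵥ (MU *ᵥ z)).re))^2 ≤
          Real.sqrt ((star z ⬝ᵥ ((Bᴴ * MV⁻¹ * B) *ᵥ z)).re)^2 := by
        apply sq_le_sq' _ h1
        nlinarith [Real.sqrt_nonneg ((star z ⬝ᵥ ((Bᴴ * MV⁻¹ * B) *ᵥ z)).re),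
          mul_nonneg hγnn (Real.sqrt_nonneg ((star z ⬝ᵥ (MU *ᵥ z)).re))]
      rw [mul_pow, Real.sq_sqrt (hu0 z), Real.sq_sqrt (ht0 z)] at h3
      exact h3
  -- upper quadratic bound from continuity
  have hup : ∀ z : Fin n → ℂ,
      (star z ⬝ᵥ ((Bᴴ * MV⁻¹ * B) *ᵥ z)).re ≤ (star z ⬝ᵥ (MU *ᵥ z)).re := by
    intro z
    have h := hcont z (MV⁻¹ *ᵥ (B *ᵥ z))
    rw [pair_v0 B hMV z, qV_v0 B hMV z, norm_of_nonneg' (hSpsd.dotProduct_mulVec_nonneg z)] at h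
    set t := (star z ⬝ᵥ ((Bᴴ * MV⁻¹ * B) *ᵥ z)).re
    set u := (star z ⬝ᵥ (MU *ᵥ z)).re
    nlinarith [Real.sqrt_nonneg t, Real.sqrt_nonneg u, Real.sq_sqrt (ht0 z),
      Real.sq_sqrt (hu0 z), sq_nonneg (Real.sqrt u - Real.sqrt t)]
  constructor
  · constructor
    · -- S - γ² MU PSD
      refine PosSemidef.of_dotProduct_mulVec_nonneg ?_ ?_
      · have h1 : (((γ:ℂ)^2) • MU).IsHermitian := by
          show _ᴴ = _
          rw [conjTranspose_smul, hMU.1.eq]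
          congr 1
          simp [← Complex.ofReal_pow, Complex.conj_ofReal]
        exact hSpsd.1.sub h1
      · intro x
        rw [sub_mulVec, dotProduct_sub, smul_mulVec, dotProduct_smul, smul_eq_mul]
        rw [Complex.le_def]
        constructor
        · have := hlow x
          simp only [Complex.zero_re, Complex.sub_re, Complex.mul_re, ← Complex.ofReal_pow,
            Complex.ofReal_re, Complex.ofReal_im, himU x, mul_zero, zero_mul, sub_zero]
          linarith
        · simp [Complex.sub_im, Complex.mul_im, ← Complex.ofReal_pow, him x, himU x]
    · -- MU - S PSD
      refine PosSemidef.of_dotProduct_mulVec_nonneg ?_ ?_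
      · exact hMU.1.sub hSpsd.1
      · intro x
        rw [sub_mulVec, dotProduct_sub, Complex.le_def]
        constructor
        · have := hup x
          simp only [Complex.zero_re, Complex.sub_re]
          linarith
        · simp [Complex.sub_im, him x, himU x]
  · -- attainment
    haveI : Nonempty (Fin n) := ⟨⟨0, hn⟩⟩
    haveI : Nontrivial (Fin n → ℂ) := by
      refine ⟨0, (fun _ => 1), fun h => ?_⟩
      have := congrFun h ⟨0, hn⟩
      simp at this
    have hsne : (Metric.sphere (0 : Fin n → ℂ) 1).Nonempty :=
      NormedSpace.sphere_nonempty.mpr zero_le_one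
    have hcomp : IsCompact (Metric.sphere (0 : Fin n → ℂ) 1) := isCompact_sphere 0 1
    have hcS : Continuous fun z : Fin n → ℂ => (star z ⬝ᵥ ((Bᴴ * MV⁻¹ * B) *ᵥ z)).re :=
      Complex.continuous_re.comp
        (Continuous.dotProduct continuous_star (continuous_const.matrix_mulVec continuous_id))
    have hcU : Continuous fun z : Fin n → ℂ => (star z ⬝ᵥ (MU *ᵥ z)).re :=
      Complex.continuous_re.comp
        (Continuous.dotProduct continuous_star (continuous_const.matrix_mulVec continuous_id))
    have hcf : ContinuousOn (fun z : Fin n → ℂ =>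
        Real.sqrt ((star z ⬝ᵥ ((Bᴴ * MV⁻¹ * B) *ᵥ z)).re) /
          Real.sqrt ((star z ⬝ᵥ (MU *ᵥ z)).re)) (Metric.sphere (0 : Fin n → ℂ) 1) := by
      apply ContinuousOn.div
      · exact (Real.continuous_sqrt.comp hcS).continuousOn
      · exact (Real.continuous_sqrt.comp hcU).continuousOn
      · intro z hz
        have hzn : z ≠ 0 := by
          intro h0
          rw [mem_sphere_zero_iff_norm, h0, norm_zero] at hz
          norm_num at hz
        exact ne_of_gt (Real.sqrt_pos.mpr (hupos z hzn))
    obtain ⟨z₀, hz₀K, hz₀min⟩ := hcomp.exists_isMinOn hsne hcf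
    have hz₀ne : z₀ ≠ 0 := by
      intro h0
      rw [mem_sphere_zero_iff_norm, h0, norm_zero] at hz₀K
      norm_num at hz₀K
    -- scale invariance: the min on the sphere bounds all values
    have hscale : ∀ z : Fin n → ℂ, z ≠ 0 →
        Real.sqrt ((star z₀ ⬝ᵥ ((Bᴴ * MV⁻¹ * B) *ᵥ z₀)).re) /
          Real.sqrt ((star z₀ ⬝ᵥ (MU *ᵥ z₀)).re) ≤
        Real.sqrt ((star z ⬝ᵥ ((Bᴴ * MV⁻¹ * B) *ᵥ z)).re) /
          Real.sqrt ((star z ⬝ᵥ (MU *ᵥ z)).re) := by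
      intro z hz
      have hc : (0:ℝ) < ‖z‖⁻¹ := inv_pos.mpr (norm_pos_iff.mpr hz)
      have hz' : ((‖z‖⁻¹ : ℝ) : ℂ) • z ∈ Metric.sphere (0 : Fin n → ℂ) 1 := by
        rw [mem_sphere_zero_iff_norm, norm_smul]
        simp [norm_pos_iff.mpr hz, inv_mul_cancel₀ (norm_ne_zero_iff.mpr hz)]
      have h1 := hz₀min hz'
      have e1 := quad_smul (Bᴴ * MV⁻¹ * B) (‖z‖⁻¹) z
      have e2 := quad_smul MU (‖z‖⁻¹) z
      simp only [Set.mem_setOf_eq] at h1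
      rw [e1, e2] at h1
      rw [Real.sqrt_mul (sq_nonneg _), Real.sqrt_mul (sq_nonneg _), Real.sqrt_sq hc.le] at h1
      rw [mul_div_mul_left _ _ (ne_of_gt hc)] at h1
      exact h1
    have hγeq : γ = Real.sqrt ((star z₀ ⬝ᵥ ((Bᴴ * MV⁻¹ * B) *ᵥ z₀)).re) /
        Real.sqrt ((star z₀ ⬝ᵥ (MU *ᵥ z₀)).re) := by
      refine le_antisymm (hγle z₀ hz₀ne) ?_
      rw [hγ']
      exact le_ciInf fun z => hscale z z.2
    refine ⟨z₀, hz₀ne, ?_⟩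
    have hu := hupos z₀ hz₀ne
    have hre : (star z₀ ⬝ᵥ ((Bᴴ * MV⁻¹ * B) *ᵥ z₀)).re = γ^2 * (star z₀ ⬝ᵥ (MU *ᵥ z₀)).re := by
      have h2 : γ * Real.sqrt ((star z₀ ⬝ᵥ (MU *ᵥ z₀)).re) =
          Real.sqrt ((star z₀ ⬝ᵥ ((Bᴴ * MV⁻¹ * B) *ᵥ z₀)).re) := by
        rw [hγeq, div_mul_cancel₀ _ (ne_of_gt (Real.sqrt_pos.mpr hu))]
      have h3 : (γ * Real.sqrt ((star z₀ ⬝ᵥ (MU *ᵥ z₀)).re))^2 =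
          Real.sqrt ((star z₀ ⬝ᵥ ((Bᴴ * MV⁻¹ * B) *ᵥ z₀)).re)^2 := by rw [h2]
      rw [mul_pow, Real.sq_sqrt (hu0 z₀), Real.sq_sqrt (ht0 z₀)] at h3
      exact h3.symm
    apply Complex.ext
    · rw [hre]
      simp only [Complex.mul_re, ← Complex.ofReal_pow, Complex.ofReal_re, Complex.ofReal_im,
        himU z₀, mul_zero, zero_mul, sub_zero]
    · simp [Complex.mul_im, ← Complex.ofReal_pow, him z₀, himU z₀]
end

section
/- With E := ∏_{i=N}^{0}(I−P_i) (product of complementary orthogonal projections applied in order), the symmetric subspace correction operator satisfies ⟨Q^{-1}M z, z⟩ = ‖z‖² − ‖E z‖² for all z ∈ X; consequently Q^{-1}M is self-adjoint with spectrum contained in [0, 1], and its largest eigenvalue equals 1 whenever some X_i ≠ {0}. -/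
open ContinuousLinearMap in
private lemma clm_isUnit_of_injective {X : Type*} [NormedAddCommGroup X]
    [InnerProductSpace ℂ X] [FiniteDimensional ℂ X]
    {S : X →L[ℂ] X} (h : Function.Injective S) : IsUnit S := by
  have hb : Function.Bijective (S : X →ₗ[ℂ] X) :=
    ⟨h, (LinearMap.injective_iff_surjective).mp h⟩
  let e := LinearEquiv.ofBijective (S : X →ₗ[ℂ] X) hb
  refine ⟨⟨S, LinearMap.toContinuousLinearMap (e.symm : X →ₗ[ℂ] X), ?_, ?_⟩, rfl⟩
  · ext x
    simp [ContinuousLinearMap.mul_apply]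
    exact e.apply_symm_apply x
  · ext x
    simp [ContinuousLinearMap.mul_apply]
    exact e.symm_apply_apply x

private lemma exists_eigvec {X : Type*} [NormedAddCommGroup X]
    [InnerProductSpace ℂ X] [FiniteDimensional ℂ X]
    {T : X →L[ℂ] X} {μ : ℂ} (h : μ ∈ spectrum ℂ T) : ∃ z, z ≠ 0 ∧ T z = μ • z := by
  by_contra hc
  push_neg at hc
  apply spectrum.mem_iff.mp h
  apply clm_isUnit_of_injective
  rw [injective_iff_map_eq_zero]
  intro z hz
  by_contra hz0
  apply hc z hz0
  have : μ • z - T z = 0 := by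
    simpa [Algebra.algebraMap_eq_smul_one] using hz
  have := sub_eq_zero.mp this
  exact this.symm

private lemma prod_inj {X : Type*} [NormedAddCommGroup X]
    [InnerProductSpace ℂ X] [FiniteDimensional ℂ X] :
    ∀ (l : List (X →L[ℂ] X)), Function.Injective l.prod →
      ∀ g ∈ l, Function.Injective g := by
  intro l
  induction l with
  | nil => intro _ g hg; exact absurd hg List.not_mem_nil
  | cons a t ih =>
    intro hinj g hg
    have hprod : (a :: t).prod = a * t.prod := List.prod_cons
    have hcomp : Function.Injective (⇑a ∘ ⇑t.prod) := by
      intro x y hxy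
      apply hinj
      simpa [hprod, ContinuousLinearMap.mul_apply] using hxy
    have htinj : Function.Injective t.prod := Function.Injective.of_comp hcomp
    have htsurj : Function.Surjective (t.prod : X →ₗ[ℂ] X) :=
      (LinearMap.injective_iff_surjective).mp htinj
    rcases List.mem_cons.mp hg with h | h
    · subst h
      intro x y hxy
      obtain ⟨u, hu⟩ := htsurj x
      obtain ⟨v, hv⟩ := htsurj y
      have : (⇑g ∘ ⇑t.prod) u = (⇑g ∘ ⇑t.prod) v := by
        simp only [Function.comp]
        rw [show t.prod u = x from hu, show t.prod v = y from hv]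
        exact hxy
      have := hcomp this
      rw [← hu, ← hv, this]
    · exact ih htinj g h

/-- With `E = ∏_{i=N}^{0}(I−P_i)` and `Q⁻¹M = I − E*E`, one has
`⟨Q⁻¹Mz, z⟩ = ‖z‖² − ‖Ez‖²` for all `z`; consequently `Q⁻¹M` is self-adjoint with spectrum
in `[0,1]`, and `1` is an eigenvalue (the largest) whenever some `X_i ≠ {0}`. -/
theorem stmt_9 {X : Type*}
    [NormedAddCommGroup X] [InnerProductSpace ℂ X] [FiniteDimensional ℂ X]
    (N : ℕ) (W : ℕ → Submodule ℂ X)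
    (E A : X →L[ℂ] X)
    (hE : E = (((List.range (N + 1)).map
        (fun i => (1 : X →L[ℂ] X) -
          (W i).subtypeL.comp (Submodule.orthogonalProjection (W i)))).reverse).prod)
    (hA : A = 1 - (ContinuousLinearMap.adjoint E) * E) :
    (∀ z : X, (inner ℂ (A z) z : ℂ) = ((‖z‖ ^ 2 - ‖E z‖ ^ 2 : ℝ) : ℂ)) ∧
      IsSelfAdjoint A ∧
      spectrum ℂ A ⊆ (Complex.ofReal '' Set.Icc 0 1) ∧
      ((∃ i ≤ N, W i ≠ ⊥) → (1 : ℂ) ∈ spectrum ℂ A) := by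
  -- the factors are contractions
  set f : ℕ → (X →L[ℂ] X) := fun i => (1 : X →L[ℂ] X) -
      (W i).subtypeL.comp (Submodule.orthogonalProjection (W i)) with hf
  have hfactor : ∀ i (x : X), ‖f i x‖ ≤ ‖x‖ := by
    intro i x
    have hx : f i x = x - (Submodule.orthogonalProjection (W i) x : X) := by
      simp [hf]
    rw [hx, show x - (Submodule.orthogonalProjection (W i) x : X) = ((Submodule.orthogonalProjection (W i)ᗮ) x : X) from (Submodule.starProjection_orthogonal_val x).symm]
    calc ‖((Submodule.orthogonalProjection (W i)ᗮ) x : X)‖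
        = ‖(Submodule.orthogonalProjection (W i)ᗮ) x‖ := rfl
      _ ≤ ‖Submodule.orthogonalProjection (W i)ᗮ‖ * ‖x‖ :=
          (Submodule.orthogonalProjection (W i)ᗮ).le_opNorm x
      _ ≤ 1 * ‖x‖ :=
          mul_le_mul_of_nonneg_right (Submodule.orthogonalProjectionOnto_norm_le _) (norm_nonneg x)
      _ = ‖x‖ := one_mul _
  -- E is a contraction
  have hEcontr : ∀ x : X, ‖E x‖ ≤ ‖x‖ := by
    have key : ∀ (l : List ℕ), ∀ x : X, ‖(l.map f).prod x‖ ≤ ‖x‖ := by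
      intro l
      induction l with
      | nil => intro x; simp
      | cons a t ih =>
        intro x
        have : ((a :: t).map f).prod = f a * (t.map f).prod := by simp
        rw [this, ContinuousLinearMap.mul_apply]
        exact le_trans (hfactor a _) (ih x)
    intro x
    rw [hE, ← List.map_reverse]
    exact key _ x
  -- part 1
  have part1 : ∀ z : X, (inner ℂ (A z) z : ℂ) = ((‖z‖ ^ 2 - ‖E z‖ ^ 2 : ℝ) : ℂ) := by
    intro z
    rw [hA]
    simp only [ContinuousLinearMap.sub_apply, ContinuousLinearMap.one_apply,
      ContinuousLinearMap.mul_apply, inner_sub_left,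
      ContinuousLinearMap.adjoint_inner_left]
    rw [inner_self_eq_norm_sq_to_K, inner_self_eq_norm_sq_to_K]
    norm_cast
  -- part 2
  have part2 : IsSelfAdjoint A := by
    rw [hA, ← ContinuousLinearMap.star_eq_adjoint]
    exact (IsSelfAdjoint.one (X →L[ℂ] X)).sub (IsSelfAdjoint.star_mul_self E)
  refine ⟨part1, part2, ?_, ?_⟩
  · -- spectrum ⊆ [0,1]
    intro μ hμ
    obtain ⟨z, hz0, hzA⟩ := exists_eigvec hμ
    have hzn : (0:ℝ) < ‖z‖ ^ 2 := pow_pos (norm_pos_iff.mpr hz0) 2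
    have h1 : (inner ℂ (A z) z : ℂ) = (starRingEnd ℂ) μ * (‖z‖ ^ 2 : ℝ) := by
      rw [hzA, inner_smul_left, inner_self_eq_norm_sq_to_K]
      norm_cast
    have h2 := part1 z
    rw [h1] at h2
    have hμeq : (starRingEnd ℂ) μ = (((‖z‖ ^ 2 - ‖E z‖ ^ 2) / ‖z‖ ^ 2 : ℝ) : ℂ) := by
      have hne : ((‖z‖ ^ 2 : ℝ) : ℂ) ≠ 0 := by
        exact_mod_cast hzn.ne'
      rw [Complex.ofReal_div, eq_div_iff hne]
      push_cast at h2 ⊢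
      linear_combination h2
    have hμreal : μ = (((‖z‖ ^ 2 - ‖E z‖ ^ 2) / ‖z‖ ^ 2 : ℝ) : ℂ) := by
      have := congrArg (starRingEnd ℂ) hμeq
      simpa [Complex.conj_ofReal] using this
    refine ⟨(‖z‖ ^ 2 - ‖E z‖ ^ 2) / ‖z‖ ^ 2, ⟨?_, ?_⟩, hμreal.symm⟩
    · have h3 := hEcontr z
      have h4 : ‖E z‖ ^ 2 ≤ ‖z‖ ^ 2 := by nlinarith [norm_nonneg (E z), norm_nonneg z]
      exact div_nonneg (by linarith) (le_of_lt hzn)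
    · rw [div_le_one hzn]
      nlinarith [norm_nonneg (E z)]
  · -- 1 ∈ spectrum
    rintro ⟨i, hiN, hWi⟩
    -- find z ≠ 0 with E z = 0
    have hfinj : ¬ Function.Injective (f i) := by
      obtain ⟨w, hw, hw0⟩ := Submodule.exists_mem_ne_zero_of_ne_bot hWi
      intro hinj
      apply hw0
      apply hinj
      have : f i w = 0 := by
        simp [hf, show (Submodule.orthogonalProjection (W i) w : X) = w from Submodule.starProjection_eq_self_iff.mpr hw]
      simpa using this
    have hmem : f i ∈ ((List.range (N + 1)).map f).reverse := by
      rw [List.mem_reverse]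
      exact List.mem_map_of_mem (f := f) (List.mem_range.mpr (Nat.lt_succ_of_le hiN))
    have hEinj : ¬ Function.Injective E := by
      intro h
      exact hfinj (prod_inj _ (hE ▸ h) (f i) hmem)
    have : ∃ z : X, z ≠ 0 ∧ E z = 0 := by
      by_contra hc
      push_neg at hc
      apply hEinj
      rw [injective_iff_map_eq_zero]
      intro z hz
      by_contra hz0
      exact (hc z hz0) hz
    obtain ⟨z, hz0, hEz⟩ := this
    have hAz : A z = z := by
      rw [hA]
      simp [ContinuousLinearMap.mul_apply, hEz]
    rw [spectrum.mem_iff]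
    intro hu
    obtain ⟨u, hu'⟩ := hu
    have h1 : (algebraMap ℂ (X →L[ℂ] X) 1 - A) z = 0 := by
      simp [Algebra.algebraMap_eq_smul_one, hAz]
    have : z = 0 := by
      calc z = ((↑u⁻¹ * ↑u : X →L[ℂ] X)) z := by
              rw [u.inv_mul]; simp
        _ = (↑u⁻¹ : X →L[ℂ] X) ((algebraMap ℂ (X →L[ℂ] X) 1 - A) z) := by
              rw [hu']; rfl
        _ = 0 := by rw [h1]; simp
    exact hz0 this
end

section
/- Let X be a finite-dimensional Hilbert space, X_0,…,X_N subspaces with X_0 + ⋯ + X_N = X, P_i the orthogonal projections, and E = ∏_{i=N}^{0}(I−P_i). Then ‖E z‖ < ‖z‖ for every z ≠ 0; consequently the operator I − E*E is positive definite. -/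
open Submodule in
private lemma aux_proj {X : Type*} [NormedAddCommGroup X] [InnerProductSpace ℂ X]
    [FiniteDimensional ℂ X] (W : Submodule ℂ X) (x : X) :
    ‖x - (W.subtypeL.comp (orthogonalProjection W)) x‖ ≤ ‖x‖ ∧
      (‖x - (W.subtypeL.comp (orthogonalProjection W)) x‖ = ‖x‖ →
        x - (W.subtypeL.comp (orthogonalProjection W)) x = x ∧ x ∈ Wᗮ) := by
  set p : X := (W.subtypeL.comp (orthogonalProjection W)) x with hp
  have hpW : p ∈ W := by simp [hp]
  have hr : x - p ∈ Wᗮ := W.sub_starProjection_mem_orthogonal x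
  have hinner : (inner ℂ p (x - p) : ℂ) = 0 := hr p hpW
  have hpyth : ‖p + (x - p)‖ * ‖p + (x - p)‖ = ‖p‖ * ‖p‖ + ‖x - p‖ * ‖x - p‖ :=
    norm_add_sq_eq_norm_sq_add_norm_sq_of_inner_eq_zero p (x - p) hinner
  have hsum : ‖x‖ * ‖x‖ = ‖p‖ * ‖p‖ + ‖x - p‖ * ‖x - p‖ := by
    simpa using hpyth
  constructor
  · nlinarith [norm_nonneg p, norm_nonneg x, norm_nonneg (x - p), mul_self_nonneg ‖p‖]
  · intro heq
    rw [heq] at hsum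
    have hp0 : ‖p‖ * ‖p‖ = 0 := by linarith
    have hp0' : p = 0 := norm_eq_zero.mp (mul_self_eq_zero.mp hp0)
    constructor
    · simp [hp0']
    · simpa [hp0'] using hr

private lemma aux_list {X : Type*} [NormedAddCommGroup X] [InnerProductSpace ℂ X]
    [FiniteDimensional ℂ X] (W : ℕ → Submodule ℂ X) (l : List ℕ) (x : X) :
    ‖((l.map (fun i => (1 : X →L[ℂ] X) -
        (W i).subtypeL.comp (Submodule.orthogonalProjection (W i)))).prod) x‖ ≤ ‖x‖ ∧
      (‖((l.map (fun i => (1 : X →L[ℂ] X) -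
        (W i).subtypeL.comp (Submodule.orthogonalProjection (W i)))).prod) x‖ = ‖x‖ →
        ((l.map (fun i => (1 : X →L[ℂ] X) -
          (W i).subtypeL.comp (Submodule.orthogonalProjection (W i)))).prod) x = x ∧
          ∀ i ∈ l, x ∈ (W i)ᗮ) := by
  induction l with
  | nil => simp
  | cons a l ih =>
    set f : ℕ → (X →L[ℂ] X) := fun i => (1 : X →L[ℂ] X) -
        (W i).subtypeL.comp (Submodule.orthogonalProjection (W i)) with hf
    have hprod : ((List.map f (a :: l)).prod) x = (f a) ((List.map f l).prod x) := by
      simp [List.prod_cons]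
    set y : X := (List.map f l).prod x with hy
    have hfa : (f a) y = y - ((W a).subtypeL.comp (Submodule.orthogonalProjection (W a))) y := by
      simp [hf]
    have haux := aux_proj (W a) y
    rw [← hfa] at haux
    constructor
    · rw [hprod]
      exact le_trans haux.1 ih.1
    · intro heq
      rw [hprod] at heq
      have hy_eq : ‖y‖ = ‖x‖ := le_antisymm ih.1 (heq ▸ haux.1)
      have h1 := ih.2 hy_eq
      have h2 := haux.2 (by rw [heq, hy_eq])
      have hyx : y = x := h1.1
      refine ⟨by rw [hprod, h2.1, hyx], ?_⟩
      intro i hi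
      rcases List.mem_cons.mp hi with h | h
      · subst h; exact hyx ▸ h2.2
      · exact h1.2 i h

/-- If `X_0 + ⋯ + X_N = X` (finite dimensions), then the ordered product
`E = ∏_{i=N}^{0}(I−P_i)` of complementary orthogonal projections is a strict contraction off
zero: `‖Ez‖ < ‖z‖` for `z ≠ 0`; consequently `I − E*E` is positive definite. -/
theorem stmt_10 {X : Type*}
    [NormedAddCommGroup X] [InnerProductSpace ℂ X] [FiniteDimensional ℂ X]
    (N : ℕ) (W : ℕ → Submodule ℂ X)
    (hsum : (⨆ i ∈ Finset.range (N + 1), W i) = ⊤)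
    (E : X →L[ℂ] X)
    (hE : E = (((List.range (N + 1)).map
        (fun i => (1 : X →L[ℂ] X) -
          (W i).subtypeL.comp (Submodule.orthogonalProjection (W i)))).reverse).prod) :
    (∀ z : X, z ≠ 0 → ‖E z‖ < ‖z‖) ∧
      (∀ z : X, z ≠ 0 →
        0 < ((inner ℂ (((1 : X →L[ℂ] X) - (ContinuousLinearMap.adjoint E) * E) z) z : ℂ)).re) := by
  have hE' : E = (((List.range (N + 1)).reverse.map
      (fun i => (1 : X →L[ℂ] X) -
        (W i).subtypeL.comp (Submodule.orthogonalProjection (W i)))).prod) := by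
    rw [hE, List.map_reverse]
  have key : ∀ z : X, z ≠ 0 → ‖E z‖ < ‖z‖ := by
    intro z hz
    have h := aux_list W (List.range (N + 1)).reverse z
    rw [← hE'] at h
    rcases lt_or_eq_of_le h.1 with hlt | heq
    · exact hlt
    · exfalso
      have horth : ∀ i ∈ Finset.range (N + 1), z ∈ (W i)ᗮ := by
        intro i hi
        exact (h.2 heq).2 i (by simpa using Finset.mem_range.mp hi)
      have hle : (⊤ : Submodule ℂ X) ≤ (ℂ ∙ z)ᗮ := by
        rw [← hsum]
        refine iSup₂_le fun i hi => ?_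
        intro w hw
        rw [Submodule.mem_orthogonal']
        intro u hu
        rcases Submodule.mem_span_singleton.mp hu with ⟨c, rfl⟩
        have : (inner ℂ w z : ℂ) = 0 := (horth i hi) w hw
        rw [inner_smul_right, this, mul_zero]
      have : z ∈ (ℂ ∙ z)ᗮ := hle Submodule.mem_top
      have : (inner ℂ z z : ℂ) = 0 :=
        this z (Submodule.mem_span_singleton_self z)
      exact hz (inner_self_eq_zero.mp this)
  refine ⟨key, fun z hz => ?_⟩
  have hlt := key z hz
  have hcomp : ((inner ℂ (((1 : X →L[ℂ] X) - (ContinuousLinearMap.adjoint E) * E) z) z : ℂ))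
      = (inner ℂ z z : ℂ) - (inner ℂ (E z) (E z) : ℂ) := by
    simp only [ContinuousLinearMap.sub_apply, ContinuousLinearMap.one_apply,
      ContinuousLinearMap.mul_apply, inner_sub_left]
    rw [ContinuousLinearMap.adjoint_inner_left]
  rw [hcomp]
  have h1 : (inner ℂ z z : ℂ) = (‖z‖ : ℂ) ^ 2 := inner_self_eq_norm_sq_to_K z
  have h2 : (inner ℂ (E z) (E z) : ℂ) = (‖E z‖ : ℂ) ^ 2 := inner_self_eq_norm_sq_to_K (E z)
  rw [h1, h2]
  have : ((‖z‖ : ℂ) ^ 2 - (‖E z‖ : ℂ) ^ 2).re = ‖z‖ ^ 2 - ‖E z‖ ^ 2 := by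
    simp [Complex.sub_re, ← Complex.ofReal_pow]
  rw [this]
  have hEz : 0 ≤ ‖E z‖ := norm_nonneg _
  nlinarith
end

section
/- Let K be the saddle-point matrix [[A, B],[B^H, 0]] with A Hermitian positive definite and B of full column rank, preconditioned by the block-diagonal matrix diag(Q_V, Q_S) with Q_V, Q_S Hermitian positive definite. Assume γ_V Q_V ≤ A ≤ Q_V (i.e. Γ_V = 1) and Q_S = S := B^H A^{-1} B (i.e. γ_S = Γ_S = 1). Then every negative generalized eigenvalue λ of K x = λ diag(Q_V,Q_S) x satisfies γ_V ≤ λ²/(1+λ). -/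
open Matrix
open scoped ComplexOrder

private lemma creal {z : ℂ} (h : 0 ≤ z) : z = (z.re : ℂ) := by
  have h2 := Complex.nonneg_iff.mp h
  exact Complex.ext (by simp) (by simp [← h2.2])

private lemma herm_dot {m : ℕ} {H : Matrix (Fin m) (Fin m) ℂ} (hH : H.IsHermitian)
    (x y : Fin m → ℂ) :
    star x ⬝ᵥ (H *ᵥ y) = star (star y ⬝ᵥ (H *ᵥ x)) := by
  rw [star_dotProduct]
  congr 1
  rw [star_mulVec, hH.eq, dotProduct_mulVec]

private lemma smulPD {m : ℕ} {c : ℝ} (hc : 0 < c) {Q : Matrix (Fin m) (Fin m) ℂ}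
    (hQ : Q.PosDef) : ((c : ℂ) • Q).PosDef := by
  refine PosDef.of_dotProduct_mulVec_pos ?_ fun x hx => ?_
  · rw [IsHermitian, conjTranspose_smul, hQ.1.eq]
    simp [Complex.conj_ofReal]
  · rw [smul_mulVec, dotProduct_smul, smul_eq_mul]
    exact mul_pos (by exact_mod_cast hc) (hQ.dotProduct_mulVec_pos hx)

private lemma expand_dot {m : ℕ} (H : Matrix (Fin m) (Fin m) ℂ) (t : ℝ) (w v : Fin m → ℂ) :
    star ((t : ℂ) • w + v) ⬝ᵥ (H *ᵥ ((t : ℂ) • w + v)) =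
      (t : ℂ) ^ 2 * (star w ⬝ᵥ (H *ᵥ w)) + (t : ℂ) * (star w ⬝ᵥ (H *ᵥ v)) +
        (t : ℂ) * (star v ⬝ᵥ (H *ᵥ w)) + star v ⬝ᵥ (H *ᵥ v) := by
  simp only [mulVec_add, mulVec_smul, star_add, star_smul, dotProduct_add,
    add_dotProduct, dotProduct_smul, smul_dotProduct, smul_eq_mul,
    RCLike.star_def, Complex.conj_ofReal]
  ring

set_option maxHeartbeats 1000000

/-- For the saddle-point matrix `[[A, B],[Bᴴ, 0]]` with `A` Hermitian positive
definite and `B` of full column rank, preconditioned by `diag(Q_V, Q_S)` with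
`γ_V Q_V ≤ A ≤ Q_V` and `Q_S = S = Bᴴ A⁻¹ B`, every negative generalized eigenvalue `λ`
satisfies `λ > −1` and `γ_V ≤ λ²/(1+λ)`. -/
theorem stmt_13 {m n : ℕ}
    (A : Matrix (Fin m) (Fin m) ℂ) (hA : A.PosDef)
    (B : Matrix (Fin m) (Fin n) ℂ) (hB : Function.Injective B.mulVec)
    (QV : Matrix (Fin m) (Fin m) ℂ) (hQV : QV.PosDef)
    (γV : ℝ) (hγV0 : 0 < γV) (hγV1 : γV ≤ 1)
    (hlow : (A - (γV : ℂ) • QV).PosSemidef)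
    (hup : (QV - A).PosSemidef)
    (lam : ℝ) (hlam : lam < 0)
    (v : Fin m → ℂ) (u : Fin n → ℂ) (hvu : ¬(v = 0 ∧ u = 0))
    (heig1 : A *ᵥ v + B *ᵥ u = (lam : ℂ) • (QV *ᵥ v))
    (heig2 : Bᴴ *ᵥ v = (lam : ℂ) • ((Bᴴ * A⁻¹ * B) *ᵥ u)) :
    -1 < lam ∧ γV ≤ lam ^ 2 / (1 + lam) := by
  have hAd : IsUnit A.det := (Matrix.isUnit_iff_isUnit_det A).1 hA.isUnit
  have hAinv : (A⁻¹).PosDef := hA.inv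
  set w : Fin m → ℂ := A⁻¹ *ᵥ (B *ᵥ u) with hwdef
  have hAw : A *ᵥ w = B *ᵥ u := by
    rw [hwdef, mulVec_mulVec, Matrix.mul_nonsing_inv _ hAd, one_mulVec]
  set M : Matrix (Fin m) (Fin m) ℂ := A - (lam : ℂ) • QV with hMdef
  have hMpd : M.PosDef := by
    have h1 : (((-lam : ℝ) : ℂ) • QV).PosDef := smulPD (by linarith) hQV
    have h2 : M = A + ((-lam : ℝ) : ℂ) • QV := by
      rw [hMdef, Complex.ofReal_neg, neg_smul, sub_eq_add_neg]
    rw [h2]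
    exact hA.add h1
  have hMv : M *ᵥ v = -(B *ᵥ u) := by
    rw [hMdef, sub_mulVec, smul_mulVec, ← heig1]
    abel
  have hv0 : v ≠ 0 := by
    rintro rfl
    have h0 : B *ᵥ u = 0 := by simpa using heig1
    exact hvu ⟨rfl, hB (h0.trans (mulVec_zero B).symm)⟩
  -- the scalar σ
  set sc : ℂ := star (B *ᵥ u) ⬝ᵥ w with hscdef
  have hsc0 : 0 ≤ sc := by
    rw [hscdef, hwdef]
    exact hAinv.posSemidef.dotProduct_mulVec_nonneg (B *ᵥ u)
  set s : ℝ := sc.re with hsdef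
  have hscre : sc = (s : ℂ) := creal hsc0
  have hstar_sc : star sc = sc := by rw [hscre]; simp
  -- key identity: vᴴ B u = λ σ
  have hS : (Bᴴ * A⁻¹ * B) *ᵥ u = Bᴴ *ᵥ w := by
    rw [hwdef, mulVec_mulVec, mulVec_mulVec, Matrix.mul_assoc]
  have hsu : star u ⬝ᵥ ((Bᴴ * A⁻¹ * B) *ᵥ u) = sc := by
    rw [hS, dotProduct_mulVec, ← star_mulVec, hscdef]
  have hvBu : star v ⬝ᵥ (B *ᵥ u) = (lam : ℂ) * sc := by
    rw [dotProduct_mulVec]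
    have h1 : star v ᵥ* B = star (Bᴴ *ᵥ v) := by
      rw [star_mulVec, conjTranspose_conjTranspose]
    rw [h1, heig2, star_smul, smul_dotProduct, star_dotProduct, hsu, hstar_sc,
      smul_eq_mul, RCLike.star_def, Complex.conj_ofReal]
  have hwBu : star w ⬝ᵥ (B *ᵥ u) = sc := by
    rw [star_dotProduct, ← hscdef, hstar_sc]
  -- cross terms
  have hwAw : star w ⬝ᵥ (A *ᵥ w) = sc := by rw [hAw]; exact hwBu
  have hwMv : star w ⬝ᵥ (M *ᵥ v) = -sc := by rw [hMv, dotProduct_neg, hwBu]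
  have hvMw : star v ⬝ᵥ (M *ᵥ w) = -sc := by
    rw [herm_dot hMpd.1 v w, hwMv, star_neg, hstar_sc]
  have hvAw : star v ⬝ᵥ (A *ᵥ w) = (lam : ℂ) * sc := by rw [hAw]; exact hvBu
  have hwAv : star w ⬝ᵥ (A *ᵥ v) = (lam : ℂ) * sc := by
    rw [herm_dot hA.1 w v, hvAw, hscre]
    simp [Complex.conj_ofReal]
  -- real scalars a, q, τ
  obtain ⟨a, hac, ha0⟩ : ∃ a : ℝ, star v ⬝ᵥ (A *ᵥ v) = (a : ℂ) ∧ 0 ≤ a :=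
    ⟨_, creal (hA.posSemidef.dotProduct_mulVec_nonneg v), (Complex.nonneg_iff.mp (hA.posSemidef.dotProduct_mulVec_nonneg v)).1⟩
  obtain ⟨q, hqc, hq0⟩ : ∃ q : ℝ, star v ⬝ᵥ (QV *ᵥ v) = (q : ℂ) ∧ 0 ≤ q :=
    ⟨_, creal (hQV.posSemidef.dotProduct_mulVec_nonneg v), (Complex.nonneg_iff.mp (hQV.posSemidef.dotProduct_mulVec_nonneg v)).1⟩
  obtain ⟨τ, hτc, hτ0⟩ : ∃ τ : ℝ, star w ⬝ᵥ (QV *ᵥ w) = (τ : ℂ) ∧ 0 ≤ τ :=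
    ⟨_, creal (hQV.posSemidef.dotProduct_mulVec_nonneg w), (Complex.nonneg_iff.mp (hQV.posSemidef.dotProduct_mulVec_nonneg w)).1⟩
  have hapos : 0 < a := by
    have h := hA.dotProduct_mulVec_pos hv0
    rw [hac] at h
    exact_mod_cast h
  -- vᴴ M v = -λσ  and positivity of s
  have hbc : star v ⬝ᵥ (M *ᵥ v) = -((lam : ℂ) * sc) := by
    rw [hMv, dotProduct_neg, hvBu]
  have hspos : 0 < s := by
    have h := hMpd.dotProduct_mulVec_pos hv0
    rw [hbc, hscre] at h
    have h2 : (0 : ℂ) < ((-(lam * s) : ℝ) : ℂ) := by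
      convert h using 1
      push_cast
      ring
    have h3 : (0 : ℝ) < -(lam * s) := by exact_mod_cast h2
    nlinarith
  -- β identity : a - λ q = -(λ s)
  have hbeta : a - lam * q = -(lam * s) := by
    have h : star v ⬝ᵥ (M *ᵥ v) = (a : ℂ) - (lam : ℂ) * (q : ℂ) := by
      rw [hMdef, sub_mulVec, smul_mulVec, dotProduct_sub, dotProduct_smul,
        hac, hqc, smul_eq_mul]
    rw [hbc, hscre] at h
    have h2 : ((-(lam * s) : ℝ) : ℂ) = ((a - lam * q : ℝ) : ℂ) := by
      push_cast
      rw [← h]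
    exact_mod_cast h2.symm
  -- a ≤ q
  have haq : a ≤ q := by
    have h := hup.dotProduct_mulVec_nonneg v
    rw [sub_mulVec, dotProduct_sub, hqc, hac] at h
    have h2 : (0 : ℝ) ≤ q - a := by exact_mod_cast h
    linarith
  -- Cauchy-Schwarz wrt A : λ² s ≤ a
  have key1 : lam ^ 2 * s ≤ a := by
    have h := hA.posSemidef.dotProduct_mulVec_nonneg (((-lam : ℝ) : ℂ) • w + v)
    rw [expand_dot A (-lam) w v, hwAw, hwAv, hvAw, hac, hscre] at h
    have h2 : (0 : ℂ) ≤ ((a - lam ^ 2 * s : ℝ) : ℂ) := by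
      convert h using 1
      push_cast
      ring
    have h3 : (0 : ℝ) ≤ a - lam ^ 2 * s := by exact_mod_cast h2
    linarith
  -- γ_V τ ≤ s
  have hγτ : γV * τ ≤ s := by
    have h := hlow.dotProduct_mulVec_nonneg w
    rw [sub_mulVec, smul_mulVec, dotProduct_sub, dotProduct_smul, hwAw, hτc,
      hscre, smul_eq_mul] at h
    have h2 : (0 : ℂ) ≤ ((s - γV * τ : ℝ) : ℂ) := by
      convert h using 1
      push_cast
      ring
    have h3 : (0 : ℝ) ≤ s - γV * τ := by exact_mod_cast h2
    linarith
  -- α = s - λ τ > 0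
  have hw0 : w ≠ 0 := by
    intro h0
    have h1 : sc = 0 := by rw [hscdef, h0, dotProduct_zero]
    rw [hscre] at h1
    have : s = 0 := by exact_mod_cast h1
    linarith
  have halc : star w ⬝ᵥ (M *ᵥ w) = ((s - lam * τ : ℝ) : ℂ) := by
    rw [hMdef, sub_mulVec, smul_mulVec, dotProduct_sub, dotProduct_smul,
      hwAw, hτc, hscre, smul_eq_mul]
    push_cast
    ring
  have hαpos : 0 < s - lam * τ := by
    have h := hMpd.dotProduct_mulVec_pos hw0
    rw [halc] at h
    exact_mod_cast h
  -- Cauchy-Schwarz wrt M : s² ≤ (-(λ s)) (s - λ τ)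
  have keyq : s ^ 2 ≤ (-(lam * s)) * (s - lam * τ) := by
    set t : ℝ := s / (s - lam * τ) with htdef
    have h := hMpd.posSemidef.dotProduct_mulVec_nonneg ((t : ℂ) • w + v)
    rw [expand_dot M t w v, halc, hwMv, hvMw, hbc, hscre] at h
    have h2 : (0 : ℂ) ≤ ((t ^ 2 * (s - lam * τ) - 2 * (t * s) - lam * s : ℝ) : ℂ) := by
      convert h using 1
      push_cast
      ring
    have h3 : (0 : ℝ) ≤ t ^ 2 * (s - lam * τ) - 2 * (t * s) - lam * s := by
      exact_mod_cast h2
    have e : t * (s - lam * τ) = s := by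
      rw [htdef]
      field_simp
    have ht2 : t ^ 2 * (s - lam * τ) = t * s := by
      rw [sq, mul_assoc, e]
    rw [ht2] at h3
    have h6 : t * s ≤ -(lam * s) := by linarith
    have h7 : (t * s) * (s - lam * τ) ≤ (-(lam * s)) * (s - lam * τ) :=
      mul_le_mul_of_nonneg_right h6 (le_of_lt hαpos)
    have e3 : (t * s) * (s - lam * τ) = s ^ 2 := by
      rw [mul_comm t s, mul_assoc, e, sq]
    rw [e3] at h7
    exact h7
  -- part 1 : -1 < lam
  have hone : -1 < lam := by
    have e2 : (1 - lam) * a ≤ -(lam * s) := by nlinarith [hbeta, haq]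
    have e3 : ((1 - lam) * lam ^ 2) * s ≤ (1 - lam) * a := by
      have h := mul_le_mul_of_nonneg_left key1 (show (0 : ℝ) ≤ 1 - lam by linarith)
      nlinarith [h]
    have e5 : ((1 - lam) * lam ^ 2) * s ≤ (-lam) * s := by nlinarith [e2, e3]
    have e4 : (1 - lam) * lam ^ 2 ≤ -lam := le_of_mul_le_mul_right e5 hspos
    by_contra hc
    push_neg at hc
    nlinarith [e4, hc, sq_nonneg lam]
  refine ⟨hone, ?_⟩
  rw [le_div_iff₀ (by linarith : (0 : ℝ) < 1 + lam)]
  have f0 : s * (s + lam * s - lam ^ 2 * τ) ≤ s * 0 := by nlinarith [keyq]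
  have f1 : s + lam * s - lam ^ 2 * τ ≤ 0 := le_of_mul_le_mul_left f0 hspos
  have f2 : γV * (s + lam * s - lam ^ 2 * τ) ≤ 0 := by nlinarith [f1, hγV0.le]
  have f3 : lam ^ 2 * (γV * τ) ≤ lam ^ 2 * s := mul_le_mul_of_nonneg_left hγτ (sq_nonneg lam)
  have f4 : (γV * (1 + lam)) * s ≤ lam ^ 2 * s := by nlinarith [f2, f3]
  exact le_of_mul_le_mul_right f4 hspos
end

section
/- In the static condensation setting, for x_S, y_S ∈ X_S one has ⟨Ξ(0,x_S), Ξ(0,y_S)⟩_X = (𝒮 x_S)(y_S), where 𝒮 := M_{SS} − M_{SK} M_{KK}^{-1} M_{KS}; moreover 𝒮 is Hermitian positive definite (as a form on X_S) if X_K ∩ X_S = {0} and the inner product is positive definite. -/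
/-- In the static condensation setting, with `ξ = M_{KK}⁻¹ M_{KS}` (so that
`Ξ(0,x_S) = x_S − ξ x_S`), the transformed inner products are given by the Schur complement
form `𝒮 = M_{SS} − M_{SK} M_{KK}⁻¹ M_{KS}`:
`⟨Ξ(0,x_S), Ξ(0,y_S)⟩ = (𝒮 x_S)(y_S) = ⟨x_S, y_S⟩ − ⟨ξ x_S, y_S⟩`; moreover `𝒮` is
Hermitian, and positive definite since `X_K ∩ X_S = {0}`. -/
theorem stmt_16 {X : Type*}
    [NormedAddCommGroup X] [InnerProductSpace ℂ X]
    (XK XS : Submodule ℂ X)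
    (hdisj : XK ⊓ XS = ⊥) (hsum : XK ⊔ XS = ⊤)
    (ξ : XS → XK)
    (hξ : ∀ xS : XS, ∀ xK : XK,
      (inner ℂ ((xK : X)) ((ξ xS : X)) : ℂ) = (inner ℂ ((xK : X)) ((xS : X)) : ℂ)) :
    (∀ xS yS : XS,
        (inner ℂ (((xS : X) - (ξ xS : X))) (((yS : X) - (ξ yS : X))) : ℂ)
          = (inner ℂ ((xS : X)) ((yS : X)) : ℂ) - (inner ℂ ((ξ xS : X)) ((yS : X)) : ℂ)) ∧
      (∀ xS yS : XS,
        (starRingEnd ℂ) ((inner ℂ (((xS : X) - (ξ xS : X))) (((yS : X) - (ξ yS : X))) : ℂ))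
          = (inner ℂ (((yS : X) - (ξ yS : X))) (((xS : X) - (ξ xS : X))) : ℂ)) ∧
      (∀ xS : XS, xS ≠ 0 →
        0 < ((inner ℂ (((xS : X) - (ξ xS : X))) (((xS : X) - (ξ xS : X))) : ℂ)).re) := by
  have key : ∀ xS yS : XS, (inner ℂ ((ξ xS : X)) ((ξ yS : X)) : ℂ)
      = (inner ℂ ((ξ xS : X)) ((yS : X)) : ℂ) := fun xS yS => hξ yS (ξ xS)
  have key2 : ∀ xS yS : XS, (inner ℂ ((xS : X)) ((ξ yS : X)) : ℂ)
      = (inner ℂ ((ξ xS : X)) ((ξ yS : X)) : ℂ) := by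
    intro xS yS
    rw [← inner_conj_symm, ← hξ xS (ξ yS), inner_conj_symm]
  have main : ∀ xS yS : XS,
      (inner ℂ (((xS : X) - (ξ xS : X))) (((yS : X) - (ξ yS : X))) : ℂ)
        = (inner ℂ ((xS : X)) ((yS : X)) : ℂ) - (inner ℂ ((ξ xS : X)) ((yS : X)) : ℂ) := by
    intro xS yS
    rw [inner_sub_left, inner_sub_right, inner_sub_right, key2, key]
    ring
  refine ⟨main, fun xS yS => inner_conj_symm _ _, ?_⟩
  intro xS hxS
  have hne : ((xS : X) - (ξ xS : X)) ≠ 0 := by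
    intro h
    have hx : (xS : X) = (ξ xS : X) := sub_eq_zero.mp h
    have hmem : (xS : X) ∈ XK ⊓ XS := ⟨hx ▸ (ξ xS).2, xS.2⟩
    rw [hdisj] at hmem
    exact hxS (Subtype.ext hmem)
  have h2 : RCLike.re (inner ℂ ((xS : X) - (ξ xS : X)) ((xS : X) - (ξ xS : X)) : ℂ)
      = ‖(xS : X) - (ξ xS : X)‖ * ‖(xS : X) - (ξ xS : X)‖ := inner_self_eq_norm_mul_norm _
  have h3 : (0:ℝ) < ‖(xS : X) - (ξ xS : X)‖ := norm_pos_iff.mpr hne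
  show (0:ℝ) < RCLike.re (inner ℂ ((xS : X) - (ξ xS : X)) ((xS : X) - (ξ xS : X)) : ℂ)
  rw [h2]; exact mul_pos h3 h3
end
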